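/- arXiv:2304.06231 — 4 statements merged into one kernel-verified Lean document; each statement's English description precedes it below -/
import Mathlib

section
/- The exact unconditional mean squared error of a subsample mean about the population mean is E[(μ̂^{(k)} − μ)²] = σ² (1/n + 1/N − 1/(nN)), where μ = E(X_1) and σ² = var(X_1), provided E(X_1²) < ∞. -/
open MeasureTheory ProbabilityTheory Filter
open scoped ENNReal NNReal

private lemma l2_mul_integrable {Ω : Type*} [MeasurableSpace Ω] {P : Measure Ω}
    {f g : Ω → ℝ} (hf : MemLp f 2 P) (hg : MemLp g 2 P) :
    Integrable (fun ω => f ω * g ω) P := by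
  have h : MemLp (f • g) 1 P :=
    hg.smul (hpqr := ⟨by rw [inv_one]; exact ENNReal.inv_two_add_inv_two⟩) hf
  exact memLp_one_iff_integrable.mp h


/-- The `k`-th subsample mean: `μ̂⁽ᵏ⁾ = n⁻¹ ∑ₘ X_{i_m^{(k)}}`. -/
noncomputable def subMean {Ω : Type*} {N n : ℕ} (X : Fin N → Ω → ℝ)
    (idxk : Fin n → Ω → Fin N) (ω : Ω) : ℝ :=
  (n : ℝ)⁻¹ * ∑ m, X (idxk m ω) ω

/-- The leave-one-out subsample mean `μ̂⁽ᵏ⁾₋ₘ = (n-1)⁻¹ ∑_{m' ≠ m} X_{i_{m'}^{(k)}}`. -/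
noncomputable def looMean {Ω : Type*} {N n : ℕ} (X : Fin N → Ω → ℝ)
    (idxk : Fin n → Ω → Fin N) (m : Fin n) (ω : Ω) : ℝ :=
  ((n : ℝ) - 1)⁻¹ * ∑ m' ∈ Finset.univ.erase m, X (idxk m' ω) ω

/-- The whole-sample mean `X̄ = N⁻¹ ∑ᵢ Xᵢ`. -/
noncomputable def wsMean {Ω : Type*} {N : ℕ} (X : Fin N → Ω → ℝ) (ω : Ω) : ℝ :=
  (N : ℝ)⁻¹ * ∑ i, X i ω

/-- The whole-sample variance `σ̂² = N⁻¹ ∑ᵢ (Xᵢ - X̄)²`. -/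
noncomputable def wsVar {Ω : Type*} {N : ℕ} (X : Fin N → Ω → ℝ) (ω : Ω) : ℝ :=
  (N : ℝ)⁻¹ * ∑ i, (X i ω - wsMean X ω) ^ 2

/-- the exact unconditional mean squared error of a subsample mean about
the population mean is `E[(μ̂⁽ᵏ⁾ − μ)²] = σ² (1/n + 1/N − 1/(nN))`. -/
theorem subsample_mean_mse
    {Ω : Type*} [MeasurableSpace Ω] (P : Measure Ω) [IsProbabilityMeasure P]
    {N n K : ℕ} (hN : 0 < N) (hn : 2 ≤ n) (hK : 0 < K)
    (X : Fin N → Ω → ℝ) (idx : Fin K → Fin n → Ω → Fin N)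
    -- the Xᵢ are i.i.d. real random variables
    (hXmeas : ∀ i, Measurable (X i))
    (hXindep : iIndepFun X P)
    (hXident : ∀ i j, IdentDistrib (X i) (X j) P P)
    -- the sampling indices are measurable, mutually independent,
    -- independent of (X₁, …, X_N), and uniformly distributed on {1, …, N}
    (hidxmeas : ∀ k m, Measurable (idx k m))
    (hidxindep : iIndepFun
      (fun p : Fin K × Fin n => idx p.1 p.2) P)
    (hidxX : IndepFun (fun ω (p : Fin K × Fin n) => idx p.1 p.2 ω)
      (fun ω (i : Fin N) => X i ω) P)
    (hunif : ∀ k m (j : Fin N), P (idx k m ⁻¹' {j}) = (N : ℝ≥0∞)⁻¹)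
    -- E(X₁²) < ∞
    (hL2 : MemLp (X ⟨0, hN⟩) 2 P)
    (μ : ℝ) (hμ : μ = ∫ ω, X ⟨0, hN⟩ ω ∂P)
    (σ2 : ℝ) (hσ2 : σ2 = variance (X ⟨0, hN⟩) P)
    (k : Fin K) :
    ∫ ω, (subMean X (idx k) ω - μ) ^ 2 ∂P
      = σ2 * (1 / (n : ℝ) + 1 / (N : ℝ) - 1 / ((n : ℝ) * (N : ℝ))) := by
  classical
  have hnne : (n : ℝ) ≠ 0 := by
    have : n ≠ 0 := by omega
    exact_mod_cast this
  have hNne : (N : ℝ) ≠ 0 := by exact_mod_cast hN.ne'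
  -- moments of the Xᵢ
  have hXL2 : ∀ j, MemLp (X j) 2 P := fun j => (hXident ⟨0, hN⟩ j).memLp_snd hL2
  have hXint : ∀ j, Integrable (X j) P := fun j => (hXL2 j).integrable one_le_two
  have hXmean : ∀ j, ∫ ω, X j ω ∂P = μ := fun j => by
    rw [hμ]; exact ((hXident ⟨0, hN⟩ j).integral_eq).symm
  have hXvar : ∀ j, variance (X j) P = σ2 := fun j => by
    rw [hσ2]; exact ((hXident ⟨0, hN⟩ j).variance_eq).symm
  have hXcL2 : ∀ j, MemLp (fun ω => X j ω - μ) 2 P := fun j =>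
    (hXL2 j).sub (memLp_const μ)
  have hXcmean : ∀ j, ∫ ω, (X j ω - μ) ∂P = 0 := fun j => by
    rw [integral_sub (hXint j) (integrable_const μ), hXmean j, integral_const]
    simp
  -- centered subsample draws
  set Y : Fin n → Ω → ℝ := fun m ω => X (idx k m ω) ω - μ with hYdef
  have hYrep : ∀ m, Y m = fun ω =>
      ∑ j, (idx k m ⁻¹' {j}).indicator (fun ω => X j ω - μ) ω := by
    intro m
    funext ω
    simp only [hYdef, Set.indicator_apply, Set.mem_preimage, Set.mem_singleton_iff]
    rw [Finset.sum_ite_eq]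
    simp
  have hYL2 : ∀ m, MemLp (Y m) 2 P := by
    intro m
    rw [hYrep m]
    exact memLp_finset_sum _ fun j _ =>
      ((hXcL2 j)).indicator ((hidxmeas k m) (measurableSet_singleton j))
  have hYint2 : ∀ m m', Integrable (fun ω => Y m ω * Y m' ω) P := fun m m' =>
    l2_mul_integrable (hYL2 m) (hYL2 m')
  -- the integrand for the cross moments
  -- key cross moment computation
  have hcross : ∀ m m' : Fin n, ∫ ω, Y m ω * Y m' ω ∂P
      = if m = m' then σ2 else σ2 / N := by
    intro m m'
    -- g' p is the product of centered X's
    set g : Fin N × Fin N → Ω → ℝ :=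
      fun p ω => (X p.1 ω - μ) * (X p.2 ω - μ) with hgdef
    have hgint : ∀ p, Integrable (g p) P := fun p =>
      l2_mul_integrable (hXcL2 p.1) (hXcL2 p.2)
    have hgval : ∀ p : Fin N × Fin N,
        ∫ ω, g p ω ∂P = if p.1 = p.2 then σ2 else 0 := by
      intro p
      by_cases hp : p.1 = p.2
      · simp only [hp, if_true]
        have hv : variance (X p.2) P = ∫ ω, (X p.2 ω - μ) ^ 2 ∂P := by
          rw [variance_eq_integral (hXL2 p.2).aemeasurable, hXmean p.2]
        rw [hgdef]
        simp only [hp]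
        calc ∫ ω, (X p.2 ω - μ) * (X p.2 ω - μ) ∂P
            = ∫ ω, (X p.2 ω - μ) ^ 2 ∂P := by congr 1; funext ω; ring
          _ = σ2 := by rw [← hv, hXvar p.2]
      · have hind : IndepFun (fun ω => X p.1 ω - μ) (fun ω => X p.2 ω - μ) P := by
          have := (hXindep.indepFun hp).comp
            (measurable_id.sub measurable_const : Measurable fun x : ℝ => x - μ)
            (measurable_id.sub measurable_const : Measurable fun x : ℝ => x - μ)
          exact this
        have := hind.integral_mul_eq_mul_integral
          ((hXint p.1).sub (integrable_const μ)).aestronglyMeasurable ((hXint p.2).sub (integrable_const μ)).aestronglyMeasurable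
        rw [hgdef]
        simp only [hp, if_false]
        calc ∫ ω, (X p.1 ω - μ) * (X p.2 ω - μ) ∂P
            = (∫ ω, (X p.1 ω - μ) ∂P) * ∫ ω, (X p.2 ω - μ) ∂P := this
          _ = 0 := by rw [hXcmean p.1, hXcmean p.2]; ring
    -- the indicator events
    set A : Fin N × Fin N → Set Ω :=
      fun p => idx k m ⁻¹' {p.1} ∩ idx k m' ⁻¹' {p.2} with hAdef
    have hAmeas : ∀ p, MeasurableSet (A p) := fun p =>
      ((hidxmeas k m) (measurableSet_singleton p.1)).inter
        ((hidxmeas k m') (measurableSet_singleton p.2))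
    -- decomposition of the product
    have hdec : (fun ω => Y m ω * Y m' ω)
        = fun ω => ∑ p : Fin N × Fin N, (A p).indicator (g p) ω := by
      funext ω
      have h1 : ∀ mm : Fin n, Y mm ω = ∑ j, (if idx k mm ω = j then X j ω - μ else 0) := by
        intro mm
        rw [Finset.sum_ite_eq]
        simp [hYdef]
      rw [h1 m, h1 m', Finset.sum_mul_sum, Fintype.sum_prod_type]
      refine Finset.sum_congr rfl fun j _ => Finset.sum_congr rfl fun j' _ => ?_
      simp only [hAdef, Set.indicator_apply, Set.mem_inter_iff, Set.mem_preimage,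
        Set.mem_singleton_iff, hgdef]
      by_cases h : idx k m ω = j <;> by_cases h' : idx k m' ω = j' <;>
        simp [h, h']
    -- integrate term by term
    have hterm : ∀ p : Fin N × Fin N,
        ∫ ω, (A p).indicator (g p) ω ∂P = (P (A p)).toReal * ∫ ω, g p ω ∂P := by
      intro p
      -- independence of the indicator (index-measurable) and g p (X-measurable)
      set φ : (Fin K × Fin n → Fin N) → ℝ :=
        fun v => if v (k, m) = p.1 ∧ v (k, m') = p.2 then 1 else 0 with hφdef
      set ψ : (Fin N → ℝ) → ℝ := fun v => (v p.1 - μ) * (v p.2 - μ) with hψdef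
      have hφmeas : Measurable φ := by
        have hset : MeasurableSet {v : Fin K × Fin n → Fin N |
            v (k, m) = p.1 ∧ v (k, m') = p.2} := by
          have : {v : Fin K × Fin n → Fin N | v (k, m) = p.1 ∧ v (k, m') = p.2}
              = ((fun v : Fin K × Fin n → Fin N => v (k, m)) ⁻¹' {p.1})
                ∩ ((fun v : Fin K × Fin n → Fin N => v (k, m')) ⁻¹' {p.2}) := by
            ext v; simp [Set.mem_inter_iff]
          rw [this]
          exact ((measurable_pi_apply (k, m)) (measurableSet_singleton p.1)).inter
            ((measurable_pi_apply (k, m')) (measurableSet_singleton p.2))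
        exact Measurable.ite hset measurable_const measurable_const
      have hψmeas : Measurable ψ := by
        exact ((measurable_pi_apply p.1).sub measurable_const).mul
          ((measurable_pi_apply p.2).sub measurable_const)
      have hind : IndepFun (fun ω => φ (fun q : Fin K × Fin n => idx q.1 q.2 ω))
          (fun ω => ψ (fun i => X i ω)) P := hidxX.comp hφmeas hψmeas
      have heq1 : (fun ω => φ (fun q : Fin K × Fin n => idx q.1 q.2 ω))
          = (A p).indicator (fun _ => (1:ℝ)) := by
        funext ω
        simp only [hφdef, hAdef, Set.indicator_apply, Set.mem_inter_iff,
          Set.mem_preimage, Set.mem_singleton_iff]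
      have heq2 : (fun ω => ψ (fun i => X i ω)) = g p := by
        funext ω; simp [hψdef, hgdef]
      rw [heq1, heq2] at hind
      have hii : Integrable ((A p).indicator (fun _ => (1:ℝ))) P :=
        (integrable_const (1:ℝ)).indicator (hAmeas p)
      have hmul := hind.integral_mul_eq_mul_integral hii.aestronglyMeasurable (hgint p).aestronglyMeasurable
      have hps : (fun ω => (A p).indicator (g p) ω)
          = (fun ω => (A p).indicator (fun _ => (1:ℝ)) ω * g p ω) := by
        funext ω
        simp only [Set.indicator_apply]
        by_cases h : ω ∈ A p <;> simp [h]
      rw [hps]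
      calc ∫ ω, (A p).indicator (fun _ => (1:ℝ)) ω * g p ω ∂P
          = (∫ ω, (A p).indicator (fun _ => (1:ℝ)) ω ∂P) * ∫ ω, g p ω ∂P := hmul
        _ = (P (A p)).toReal * ∫ ω, g p ω ∂P := by
            rw [show ((A p).indicator (fun _ => (1:ℝ))) = (A p).indicator (1 : Ω → ℝ)
              from rfl, integral_indicator_one (hAmeas p)]; rfl
    -- probabilities of the diagonal events
    have hPA : ∀ j : Fin N, (P (A (j, j))).toReal
        = if m = m' then (N:ℝ)⁻¹ else (N:ℝ)⁻¹ * (N:ℝ)⁻¹ := by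
      intro j
      by_cases hm : m = m'
      · subst hm
        simp only [if_true]
        have : A (j, j) = idx k m ⁻¹' {j} := by
          simp [hAdef, Set.inter_self]
        rw [this, hunif k m j]
        simp [ENNReal.toReal_inv]
      · simp only [hm, if_false]
        have hne : ((k, m) : Fin K × Fin n) ≠ (k, m') := by
          simp [Prod.ext_iff, hm]
        have hindep2 := (hidxindep.indepFun hne).measure_inter_preimage_eq_mul
          {j} {j} (measurableSet_singleton j) (measurableSet_singleton j)
        rw [hAdef]
        simp only
        rw [hindep2, hunif k m j, hunif k m' j]
        simp [ENNReal.toReal_mul, ENNReal.toReal_inv]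
    -- put it together
    rw [hdec, integral_finset_sum _ fun p _ => (hgint p).indicator (hAmeas p)]
    have : ∀ p : Fin N × Fin N, ∫ ω, (A p).indicator (g p) ω ∂P
        = if p.1 = p.2 then ((P (A p)).toReal * σ2) else 0 := by
      intro p
      rw [hterm p, hgval p]
      by_cases h : p.1 = p.2 <;> simp [h]
    rw [Finset.sum_congr rfl fun p _ => this p]
    rw [Fintype.sum_prod_type]
    have hin : ∀ j : Fin N, (∑ j' : Fin N,
        if j = j' then ((P (A (j, j'))).toReal * σ2) else 0)
        = (P (A (j, j))).toReal * σ2 := by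
      intro j
      rw [Finset.sum_ite_eq]
      simp
    rw [Finset.sum_congr rfl fun j _ => hin j]
    rw [Finset.sum_congr rfl fun j _ => by rw [hPA j]]
    rw [Finset.sum_const, Finset.card_univ, Fintype.card_fin]
    by_cases hm : m = m' <;>
      simp only [hm, if_true, if_false, nsmul_eq_mul, not_false_iff] <;>
      field_simp <;> ring
  -- now the main computation
  have hsub : (fun ω => (subMean X (idx k) ω - μ) ^ 2)
      = fun ω => (n:ℝ)⁻¹ * (n:ℝ)⁻¹ * ∑ m : Fin n, ∑ m' : Fin n, Y m ω * Y m' ω := by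
    funext ω
    have h1 : subMean X (idx k) ω - μ = (n:ℝ)⁻¹ * ∑ m, Y m ω := by
      simp only [subMean, hYdef, Finset.sum_sub_distrib, Finset.sum_const,
        Finset.card_univ, Fintype.card_fin, nsmul_eq_mul]
      field_simp
    rw [h1, mul_pow, pow_two, pow_two, Finset.sum_mul_sum]
  rw [hsub]
  rw [integral_const_mul]
  rw [integral_finset_sum _ fun m _ => integrable_finset_sum _ fun m' _ => hYint2 m m']
  rw [Finset.sum_congr rfl fun m _ => integral_finset_sum _ fun m' _ => hYint2 m m']
  rw [Finset.sum_congr rfl fun m _ => Finset.sum_congr rfl fun m' _ => hcross m m']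
  have hrow : ∀ m : Fin n, (∑ m' : Fin n, if m = m' then σ2 else σ2 / N)
      = σ2 + ((n:ℝ) - 1) * (σ2 / N) := by
    intro m
    have : ∀ m' : Fin n, (if m = m' then σ2 else σ2 / N)
        = σ2 / N + (if m = m' then σ2 - σ2 / N else 0) := by
      intro m'; by_cases h : m = m' <;> simp [h]
    rw [Finset.sum_congr rfl fun m' _ => this m', Finset.sum_add_distrib,
      Finset.sum_ite_eq, Finset.sum_const, Finset.card_univ, Fintype.card_fin]
    simp only [Finset.mem_univ, if_true, nsmul_eq_mul]
    ring
  rw [Finset.sum_congr rfl fun m _ => hrow m, Finset.sum_const, Finset.card_univ,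
    Fintype.card_fin, nsmul_eq_mul]
  field_simp
  ring
end

section
/- The exact variance of the average of K independent subsample means is Var(K^{-1} Σ_{k=1}^K μ̂^{(k)}) = σ² (1/(nK) + 1/N − 1/(nNK)), where σ² = var(X_1), provided E(X_1²) < ∞. -/
open MeasureTheory ProbabilityTheory Filter
open scoped ENNReal NNReal

/-- the exact variance of the average of the `K` subsample means is
`Var(K⁻¹ ∑ₖ μ̂⁽ᵏ⁾) = σ² (1/(nK) + 1/N − 1/(nNK))`. -/
theorem averaged_subsample_mean_variance
    {Ω : Type*} [MeasurableSpace Ω] (P : Measure Ω) [IsProbabilityMeasure P]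
    {N n K : ℕ} (hN : 0 < N) (hn : 2 ≤ n) (hK : 0 < K)
    (X : Fin N → Ω → ℝ) (idx : Fin K → Fin n → Ω → Fin N)
    -- the Xᵢ are i.i.d. real random variables
    (hXmeas : ∀ i, Measurable (X i))
    (hXindep : iIndepFun X P)
    (hXident : ∀ i j, IdentDistrib (X i) (X j) P P)
    -- the sampling indices are measurable, mutually independent,
    -- independent of (X₁, …, X_N), and uniformly distributed on {1, …, N}
    (hidxmeas : ∀ k m, Measurable (idx k m))
    (hidxindep : iIndepFun
      (fun p : Fin K × Fin n => idx p.1 p.2) P)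
    (hidxX : IndepFun (fun ω (p : Fin K × Fin n) => idx p.1 p.2 ω)
      (fun ω (i : Fin N) => X i ω) P)
    (hunif : ∀ k m (j : Fin N), P (idx k m ⁻¹' {j}) = (N : ℝ≥0∞)⁻¹)
    -- E(X₁²) < ∞
    (hL2 : MemLp (X ⟨0, hN⟩) 2 P)
    (σ2 : ℝ) (hσ2 : σ2 = variance (X ⟨0, hN⟩) P) :
    variance (fun ω => (K : ℝ)⁻¹ * ∑ k, subMean X (idx k) ω) P
      = σ2 * (1 / ((n : ℝ) * (K : ℝ)) + 1 / (N : ℝ)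
          - 1 / ((n : ℝ) * (N : ℝ) * (K : ℝ))) := by
  classical
  set x0 : Fin N := ⟨0, hN⟩ with hx0
  set μ : ℝ := ∫ ω, X x0 ω ∂P with hμdef
  set M2 : ℝ := ∫ ω, (X x0 ω) ^ 2 ∂P with hM2def
  have hNR : (0:ℝ) < N := by exact_mod_cast hN
  have hnR : (0:ℝ) < n := by positivity
  have hKR : (0:ℝ) < K := by exact_mod_cast hK
  -- basic L² facts for the Xᵢ
  have hXL2 : ∀ i, MemLp (X i) 2 P := fun i => (hXident x0 i).memLp_snd hL2
  have hXint : ∀ i, Integrable (X i) P := fun i => (hXL2 i).integrable one_le_two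
  have hμi : ∀ i, ∫ ω, X i ω ∂P = μ := fun i => ((hXident x0 i).integral_eq).symm
  have hM2i : ∀ i, ∫ ω, (X i ω) ^ 2 ∂P = M2 := fun i =>
    (((hXident x0 i).comp (measurable_id.pow_const 2)).integral_eq).symm
  -- the indicator functions e p j = 1_{idx p = j}
  set e : Fin K × Fin n → Fin N → Ω → ℝ :=
    fun p j => (idx p.1 p.2 ⁻¹' {j}).indicator (fun _ => (1:ℝ)) with he
  have hA : ∀ (p : Fin K × Fin n) j, MeasurableSet (idx p.1 p.2 ⁻¹' {j}) :=
    fun p j => (hidxmeas p.1 p.2) (measurableSet_singleton j)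
  have hemeas : ∀ p j, Measurable (e p j) :=
    fun p j => measurable_const.indicator (hA p j)
  have heint : ∀ p j, Integrable (e p j) P :=
    fun p j => (integrable_const (1:ℝ)).indicator (hA p j)
  have hebdd : ∀ p j ω, ‖e p j ω‖ ≤ 1 := by
    intro p j ω
    simp only [he, Set.indicator_apply]
    split_ifs <;> simp
  have heval : ∀ p j, ∫ ω, e p j ω ∂P = (N:ℝ)⁻¹ := by
    intro p j
    rw [he]
    rw [integral_indicator_const (1:ℝ) (hA p j), measureReal_def, hunif p.1 p.2 j]
    simp
  -- decomposition of X (idx p ω) ω as ∑ⱼ e p j · X j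
  have hYdecomp : ∀ (p : Fin K × Fin n) ω,
      X (idx p.1 p.2 ω) ω = ∑ j, e p j ω * X j ω := by
    intro p ω
    simp only [he, Set.indicator_apply, Set.mem_preimage, Set.mem_singleton_iff,
      ite_mul, one_mul, zero_mul]
    rw [Finset.sum_ite_eq]
    simp
  -- L² membership of each summand and of the Y's
  have heX2 : ∀ p j, MemLp (fun ω => e p j ω * X j ω) 2 P := by
    intro p j
    refine (hXL2 j).of_le (((hemeas p j).mul (hXmeas j)).aestronglyMeasurable) ?_
    filter_upwards with ω
    rw [norm_mul]
    calc ‖e p j ω‖ * ‖X j ω‖ ≤ 1 * ‖X j ω‖ := by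
          gcongr; exact hebdd p j ω
      _ = ‖X j ω‖ := one_mul _
  have hYL2 : ∀ p : Fin K × Fin n, MemLp (fun ω => X (idx p.1 p.2 ω) ω) 2 P := by
    intro p
    have h : (fun ω => X (idx p.1 p.2 ω) ω) = fun ω => ∑ j, e p j ω * X j ω :=
      funext (hYdecomp p)
    rw [h]
    exact memLp_finset_sum _ (fun j _ => heX2 p j)
  have hYint : ∀ p : Fin K × Fin n, Integrable (fun ω => X (idx p.1 p.2 ω) ω) P :=
    fun p => (hYL2 p).integrable one_le_two
  -- independence of products of e's from products of X's
  have hindep_eX : ∀ (p q : Fin K × Fin n) (j j' : Fin N),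
      IndepFun (fun ω => e p j ω * e q j' ω) (fun ω => X j ω * X j' ω) P := by
    intro p q j j'
    have hφ : Measurable (fun f : Fin K × Fin n → Fin N =>
        ({j} : Set (Fin N)).indicator (fun _ => (1:ℝ)) (f p) *
        ({j'} : Set (Fin N)).indicator (fun _ => (1:ℝ)) (f q)) := by
      exact ((measurable_const.indicator (measurableSet_singleton j)).comp
        (measurable_pi_apply p)).mul
        ((measurable_const.indicator (measurableSet_singleton j')).comp
        (measurable_pi_apply q))
    have hψ : Measurable (fun g : Fin N → ℝ => g j * g j') :=
      (measurable_pi_apply j).mul (measurable_pi_apply j')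
    have h := hidxX.comp hφ hψ
    have hfe : (fun ω => e p j ω * e q j' ω)
        = (fun f : Fin K × Fin n → Fin N =>
            ({j} : Set (Fin N)).indicator (fun _ => (1:ℝ)) (f p) *
            ({j'} : Set (Fin N)).indicator (fun _ => (1:ℝ)) (f q))
          ∘ (fun ω (p : Fin K × Fin n) => idx p.1 p.2 ω) := by
      funext ω
      simp [he, Set.indicator_apply, Function.comp]
    rw [hfe]
    exact h
  have hee : ∀ (p q : Fin K × Fin n), p ≠ q → ∀ j j',
      IndepFun (e p j) (e q j') P := by
    intro p q hpq j j'
    have h := (hidxindep.indepFun hpq).comp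
      (measurable_const.indicator (measurableSet_singleton j) :
        Measurable (({j} : Set (Fin N)).indicator (fun _ => (1:ℝ))))
      (measurable_const.indicator (measurableSet_singleton j') :
        Measurable (({j'} : Set (Fin N)).indicator (fun _ => (1:ℝ))))
    have h1 : e p j = (({j} : Set (Fin N)).indicator (fun _ => (1:ℝ))) ∘ idx p.1 p.2 := by
      funext ω; simp [he, Set.indicator_apply, Function.comp]
    have h2 : e q j' = (({j'} : Set (Fin N)).indicator (fun _ => (1:ℝ))) ∘ idx q.1 q.2 := by
      funext ω; simp [he, Set.indicator_apply, Function.comp]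
    rw [h1, h2]
    exact h
  -- integrals of products of the X's
  have hXXint : ∀ j j', Integrable (fun ω => X j ω * X j' ω) P := by
    intro j j'
    by_cases h : j = j'
    · subst h
      have := (hXL2 j).integrable_sq
      simpa [pow_two] using this
    · exact (hXindep.indepFun h).integrable_mul (hXint j) (hXint j')
  have hXXval : ∀ j j', ∫ ω, X j ω * X j' ω ∂P = if j = j' then M2 else μ ^ 2 := by
    intro j j'
    by_cases h : j = j'
    · subst h
      simp only [if_pos rfl, ← pow_two]
      exact hM2i j
    · rw [if_neg h]
      have h2 := (hXindep.indepFun h).integral_mul_eq_mul_integral (hXint j).aestronglyMeasurable (hXint j').aestronglyMeasurable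
      calc ∫ ω, X j ω * X j' ω ∂P = ∫ ω, (X j * X j') ω ∂P := rfl
        _ = (∫ ω, X j ω ∂P) * ∫ ω, X j' ω ∂P := h2
        _ = μ ^ 2 := by rw [hμi j, hμi j', pow_two]
  -- integrals of products of the e's
  have heeval_diag : ∀ (p : Fin K × Fin n) (j j' : Fin N),
      ∫ ω, e p j ω * e p j' ω ∂P = if j = j' then (N:ℝ)⁻¹ else 0 := by
    intro p j j'
    by_cases hjj : j = j'
    · subst hjj
      rw [if_pos rfl]
      have hsq : ∀ ω, e p j ω * e p j ω = e p j ω := by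
        intro ω
        simp only [he, Set.indicator_apply]
        split_ifs <;> ring
      simp_rw [hsq]
      exact heval p j
    · rw [if_neg hjj]
      have hz : ∀ ω, e p j ω * e p j' ω = 0 := by
        intro ω
        simp only [he, Set.indicator_apply, Set.mem_preimage, Set.mem_singleton_iff]
        split_ifs with h1 h2
        · exact absurd (h1.symm.trans h2) hjj
        · ring
        · ring
        · ring
      simp_rw [hz]
      simp
  have heeval_ne : ∀ (p q : Fin K × Fin n), p ≠ q → ∀ (j j' : Fin N),
      ∫ ω, e p j ω * e q j' ω ∂P = (N:ℝ)⁻¹ * (N:ℝ)⁻¹ := by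
    intro p q hpq j j'
    have h2 := ((hee p q hpq j j').integral_mul_eq_mul_integral (heint p j).aestronglyMeasurable (heint q j').aestronglyMeasurable)
    calc ∫ ω, e p j ω * e q j' ω ∂P = ∫ ω, (e p j * e q j') ω ∂P := rfl
      _ = (∫ ω, e p j ω ∂P) * ∫ ω, e q j' ω ∂P := h2
      _ = (N:ℝ)⁻¹ * (N:ℝ)⁻¹ := by rw [heval, heval]
  -- expansion of products of two Y's
  have hYexpand : ∀ (p q : Fin K × Fin n) ω,
      X (idx p.1 p.2 ω) ω * X (idx q.1 q.2 ω) ω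
        = ∑ r : Fin N × Fin N, (e p r.1 ω * e q r.2 ω) * (X r.1 ω * X r.2 ω) := by
    intro p q ω
    rw [Fintype.sum_prod_type, hYdecomp p ω, hYdecomp q ω, Finset.sum_mul_sum]
    exact Finset.sum_congr rfl fun j _ => Finset.sum_congr rfl fun j' _ => by ring
  have hterm_int : ∀ (p q : Fin K × Fin n) (j j' : Fin N),
      Integrable (fun ω => (e p j ω * e q j' ω) * (X j ω * X j' ω)) P := by
    intro p q j j'
    refine (hXXint j j').bdd_mul (c := 1) (((hemeas p j).mul (hemeas q j')).aestronglyMeasurable) ?_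
    refine Filter.Eventually.of_forall fun ω => ?_
    rw [norm_mul]
    calc ‖e p j ω‖ * ‖e q j' ω‖ ≤ 1 * 1 := by
          gcongr
          · exact hebdd p j ω
          · exact hebdd q j' ω
      _ = 1 := one_mul 1
  have hYYint : ∀ p q : Fin K × Fin n,
      Integrable (fun ω => X (idx p.1 p.2 ω) ω * X (idx q.1 q.2 ω) ω) P := by
    intro p q
    have h : (fun ω => X (idx p.1 p.2 ω) ω * X (idx q.1 q.2 ω) ω)
        = fun ω => ∑ r : Fin N × Fin N, (e p r.1 ω * e q r.2 ω) * (X r.1 ω * X r.2 ω) :=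
      funext (hYexpand p q)
    rw [h]
    exact integrable_finset_sum _ fun r _ => hterm_int p q r.1 r.2
  -- the key second moments
  have hV : ∀ p q : Fin K × Fin n,
      ∫ ω, X (idx p.1 p.2 ω) ω * X (idx q.1 q.2 ω) ω ∂P
        = if p = q then M2 else M2 / N + (1 - (N:ℝ)⁻¹) * μ ^ 2 := by
    intro p q
    simp_rw [hYexpand p q]
    rw [integral_finset_sum _ (fun r _ => hterm_int p q r.1 r.2)]
    have hterm : ∀ j j', ∫ ω, (e p j ω * e q j' ω) * (X j ω * X j' ω) ∂P
        = (∫ ω, e p j ω * e q j' ω ∂P) * ∫ ω, X j ω * X j' ω ∂P := by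
      intro j j'
      have hprod_int : Integrable (fun ω => e p j ω * e q j' ω) P := by
        refine (heint q j').bdd_mul ((hemeas p j).aestronglyMeasurable) (Filter.Eventually.of_forall fun ω => hebdd p j ω)
      have h2 := (hindep_eX p q j j').integral_mul_eq_mul_integral hprod_int.aestronglyMeasurable (hXXint j j').aestronglyMeasurable
      calc ∫ ω, (e p j ω * e q j' ω) * (X j ω * X j' ω) ∂P
          = ∫ ω, ((fun ω => e p j ω * e q j' ω) * (fun ω => X j ω * X j' ω)) ω ∂P := rfl
        _ = _ := h2
    by_cases hpq : p = q
    · subst hpq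
      rw [if_pos rfl]
      simp_rw [hterm, heeval_diag, hXXval]
      rw [Fintype.sum_prod_type]
      dsimp only
      have key : ∀ j : Fin N, ∑ j' : Fin N,
          (if j = j' then (N:ℝ)⁻¹ else 0) * (if j = j' then M2 else μ ^ 2)
          = (N:ℝ)⁻¹ * M2 := by
        intro j
        rw [Finset.sum_eq_single j]
        · simp
        · intro b _ hb
          rw [if_neg (fun h => hb h.symm)]
          ring
        · intro h; exact absurd (Finset.mem_univ j) h
      simp_rw [key]
      rw [Finset.sum_const, Finset.card_univ, Fintype.card_fin, nsmul_eq_mul]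
      field_simp
    · rw [if_neg hpq]
      simp_rw [hterm, heeval_ne p q hpq, hXXval]
      rw [Fintype.sum_prod_type]
      dsimp only
      have key : ∀ j : Fin N, ∑ j' : Fin N,
          (N:ℝ)⁻¹ * (N:ℝ)⁻¹ * (if j = j' then M2 else μ ^ 2)
          = (N:ℝ)⁻¹ * (N:ℝ)⁻¹ * (((N:ℝ) - 1) * μ ^ 2 + M2) := by
        intro j
        have hsplit : ∀ j' : Fin N, (N:ℝ)⁻¹ * (N:ℝ)⁻¹ * (if j = j' then M2 else μ ^ 2)
            = (N:ℝ)⁻¹ * (N:ℝ)⁻¹ * μ ^ 2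
              + (if j = j' then (N:ℝ)⁻¹ * (N:ℝ)⁻¹ * (M2 - μ ^ 2) else 0) := by
          intro j'
          split_ifs <;> ring
        simp_rw [hsplit]
        rw [Finset.sum_add_distrib, Finset.sum_const, Finset.card_univ, Fintype.card_fin,
          nsmul_eq_mul, Finset.sum_ite_eq, if_pos (Finset.mem_univ j)]
        ring
      simp_rw [key]
      rw [Finset.sum_const, Finset.card_univ, Fintype.card_fin, nsmul_eq_mul]
      field_simp
      ring
  -- rewrite of the statistic
  have hSrw : ∀ ω, (K:ℝ)⁻¹ * ∑ k, subMean X (idx k) ω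
      = ((n:ℝ) * (K:ℝ))⁻¹ * ∑ p : Fin K × Fin n, X (idx p.1 p.2 ω) ω := by
    intro ω
    simp only [subMean, Fintype.sum_prod_type]
    rw [← Finset.mul_sum]
    ring
  have hindep_eX1 : ∀ (p : Fin K × Fin n) (j : Fin N), IndepFun (e p j) (X j) P := by
    intro p j
    have hφ : Measurable (fun f : Fin K × Fin n → Fin N =>
        ({j} : Set (Fin N)).indicator (fun _ => (1:ℝ)) (f p)) :=
      (measurable_const.indicator (measurableSet_singleton j)).comp (measurable_pi_apply p)
    have hψ : Measurable (fun g : Fin N → ℝ => g j) := measurable_pi_apply j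
    have h := hidxX.comp hφ hψ
    have hfe : e p j
        = (fun f : Fin K × Fin n → Fin N =>
            ({j} : Set (Fin N)).indicator (fun _ => (1:ℝ)) (f p))
          ∘ (fun ω (p : Fin K × Fin n) => idx p.1 p.2 ω) := by
      funext ω
      simp [he, Set.indicator_apply, Function.comp]
    rw [hfe]
    exact h
  have hYmean : ∀ p : Fin K × Fin n, ∫ ω, X (idx p.1 p.2 ω) ω ∂P = μ := by
    intro p
    simp_rw [hYdecomp p]
    rw [integral_finset_sum _ (fun j _ => (heX2 p j).integrable one_le_two)]
    have hterm : ∀ j, ∫ ω, e p j ω * X j ω ∂P = (N:ℝ)⁻¹ * μ := by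
      intro j
      have h2 := (hindep_eX1 p j).integral_mul_eq_mul_integral (heint p j).aestronglyMeasurable (hXint j).aestronglyMeasurable
      calc ∫ ω, e p j ω * X j ω ∂P = ∫ ω, (e p j * X j) ω ∂P := rfl
        _ = (∫ ω, e p j ω ∂P) * ∫ ω, X j ω ∂P := h2
        _ = (N:ℝ)⁻¹ * μ := by rw [heval, hμi]
    simp_rw [hterm]
    rw [Finset.sum_const, Finset.card_univ, Fintype.card_fin, nsmul_eq_mul]
    field_simp
  -- rewrite of the statistic
  have hSrw : ∀ ω, (K:ℝ)⁻¹ * ∑ k, subMean X (idx k) ω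
      = ((n:ℝ) * (K:ℝ))⁻¹ * ∑ p : Fin K × Fin n, X (idx p.1 p.2 ω) ω := by
    intro ω
    simp only [subMean, Fintype.sum_prod_type]
    rw [← Finset.mul_sum]
    ring
  have hS : MemLp (fun ω => (K:ℝ)⁻¹ * ∑ k, subMean X (idx k) ω) 2 P := by
    have h : (fun ω => (K:ℝ)⁻¹ * ∑ k, subMean X (idx k) ω)
        = fun ω => ((n:ℝ) * (K:ℝ))⁻¹ * ∑ p : Fin K × Fin n, X (idx p.1 p.2 ω) ω :=
      funext hSrw
    rw [h]
    exact (memLp_finset_sum _ (fun p _ => hYL2 p)).const_mul _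
  -- first moment of the statistic
  have hES : ∫ ω, (K:ℝ)⁻¹ * ∑ k, subMean X (idx k) ω ∂P = μ := by
    simp_rw [hSrw]
    rw [integral_const_mul, integral_finset_sum _ (fun p _ => hYint p)]
    simp_rw [hYmean]
    rw [Finset.sum_const, Finset.card_univ, Fintype.card_prod, Fintype.card_fin,
      Fintype.card_fin, nsmul_eq_mul]
    field_simp
    push_cast
    ring
  -- second moment of the statistic
  set V : ℝ := M2 / N + (1 - (N:ℝ)⁻¹) * μ ^ 2 with hVdef
  have hES2 : ∫ ω, ((K:ℝ)⁻¹ * ∑ k, subMean X (idx k) ω) ^ 2 ∂P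
      = ((n:ℝ) * (K:ℝ))⁻¹ ^ 2
          * (((K:ℝ) * (n:ℝ)) * ((K:ℝ) * (n:ℝ)) * V + ((K:ℝ) * (n:ℝ)) * (M2 - V)) := by
    have hsq : ∀ ω, ((K:ℝ)⁻¹ * ∑ k, subMean X (idx k) ω) ^ 2
        = ((n:ℝ) * (K:ℝ))⁻¹ ^ 2 * ∑ pq : (Fin K × Fin n) × (Fin K × Fin n),
            X (idx pq.1.1 pq.1.2 ω) ω * X (idx pq.2.1 pq.2.2 ω) ω := by
      intro ω
      rw [hSrw ω, mul_pow]
      congr 1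
      rw [pow_two, Finset.sum_mul_sum]
      exact (Fintype.sum_prod_type
        (f := fun pq : (Fin K × Fin n) × (Fin K × Fin n) =>
          X (idx pq.1.1 pq.1.2 ω) ω * X (idx pq.2.1 pq.2.2 ω) ω)).symm
    simp_rw [hsq]
    rw [integral_const_mul, integral_finset_sum _ (fun pq _ => hYYint pq.1 pq.2)]
    simp_rw [hV]
    congr 1
    rw [Fintype.sum_prod_type]
    dsimp only
    have key : ∀ p : Fin K × Fin n, ∑ q : Fin K × Fin n, (if p = q then M2 else V)
        = ((K:ℝ) * (n:ℝ)) * V + (M2 - V) := by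
      intro p
      have hsplit : ∀ q : Fin K × Fin n, (if p = q then M2 else V)
          = V + (if p = q then M2 - V else 0) := by
        intro q
        split_ifs <;> ring
      simp_rw [hsplit]
      rw [Finset.sum_add_distrib, Finset.sum_const, Finset.card_univ, Fintype.card_prod,
        Fintype.card_fin, Fintype.card_fin, nsmul_eq_mul, Finset.sum_ite_eq,
        if_pos (Finset.mem_univ p)]
      push_cast
      ring
    simp_rw [key]
    rw [Finset.sum_const, Finset.card_univ, Fintype.card_prod, Fintype.card_fin,
      Fintype.card_fin, nsmul_eq_mul]
    push_cast
    ring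
  -- put everything together
  have hσ2' : σ2 = M2 - μ ^ 2 := by
    rw [hσ2, variance_eq_sub hL2]
    rw [hM2def, hμdef]
    rfl
  rw [variance_eq_sub hS]
  rw [show (fun ω => (K:ℝ)⁻¹ * ∑ k, subMean X (idx k) ω) ^ 2
      = fun ω => ((K:ℝ)⁻¹ * ∑ k, subMean X (idx k) ω) ^ 2 from rfl]
  rw [show P[fun ω => (K:ℝ)⁻¹ * ∑ k, subMean X (idx k) ω] = μ from hES]
  rw [show (∫ ω, ((K:ℝ)⁻¹ * ∑ k, subMean X (idx k) ω) ^ 2 ∂P) = _ from hES2]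
  rw [hσ2', hVdef]
  have hN0 : (N:ℝ) ≠ 0 := ne_of_gt hNR
  have hn0 : (n:ℝ) ≠ 0 := ne_of_gt hnR
  have hK0 : (K:ℝ) ≠ 0 := ne_of_gt hKR
  field_simp
  ring
end

section
/- For the identity transformation, the conditional expectation of the jackknife sum of squared differences recovers the whole-sample variance: if E(X_1²) < ∞, then for every k, E[ Σ_{m=1}^n (μ̂^{(k)}_{−m} − μ̂^{(k)})² | X_1, …, X_N ] = σ̂²/(n − 1) almost surely. -/
set_option maxHeartbeats 1000000


open MeasureTheory ProbabilityTheory Filter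
open scoped ENNReal NNReal

lemma aux_wsVar {Ω : Type*} {N : ℕ} (hN : 0 < N) (X : Fin N → Ω → ℝ) (ω : Ω) :
    wsVar X ω = (N:ℝ)⁻¹ * ∑ i, X i ω * X i ω - wsMean X ω * wsMean X ω := by
  have hNne : (N:ℝ) ≠ 0 := Nat.cast_ne_zero.mpr hN.ne'
  have hsum : ∑ i, X i ω = (N:ℝ) * wsMean X ω := by
    rw [wsMean]; field_simp
  rw [wsVar]
  have h1 : ∀ i : Fin N, (X i ω - wsMean X ω)^2
      = X i ω * X i ω - (2 * wsMean X ω) * X i ω + wsMean X ω * wsMean X ω := fun i => by ring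
  rw [Finset.sum_congr rfl fun i _ => h1 i, Finset.sum_add_distrib, Finset.sum_sub_distrib,
    ← Finset.mul_sum, hsum, Finset.sum_const, Finset.card_univ, Fintype.card_fin, nsmul_eq_mul]
  field_simp
  ring

lemma alg_key {n : ℕ} (hn : 2 ≤ n) (y : Fin n → ℝ) :
    ∑ m, (((n:ℝ)-1)⁻¹ * ∑ m' ∈ Finset.univ.erase m, y m' - (n:ℝ)⁻¹ * ∑ m', y m')^2
    = ((n:ℝ)*((n:ℝ)-1))⁻¹ * (∑ m, y m * y m)
      - ((n:ℝ)*((n:ℝ)-1)^2)⁻¹ * (∑ m, ∑ m' ∈ Finset.univ.erase m, y m * y m') := by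
  have hnz1 : (n:ℝ) ≠ 0 := Nat.cast_ne_zero.mpr (by omega)
  have hn2 : (2:ℝ) ≤ (n:ℝ) := by exact_mod_cast hn
  have hnz2 : (n:ℝ) - 1 ≠ 0 := by linarith
  have h1 : ∀ m : Fin n, ∑ m' ∈ Finset.univ.erase m, y m' = (∑ m', y m') - y m :=
    fun m => Finset.sum_erase_eq_sub (Finset.mem_univ m)
  have h2 : ∑ m, ∑ m' ∈ Finset.univ.erase m, y m * y m'
      = (∑ m', y m') * (∑ m', y m') - ∑ m, y m * y m := by
    have h3 : ∀ m : Fin n, ∑ m' ∈ Finset.univ.erase m, y m * y m'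
        = y m * (∑ m', y m') - y m * y m := by
      intro m; rw [← Finset.mul_sum, h1 m]; ring
    rw [Finset.sum_congr rfl fun m _ => h3 m, Finset.sum_sub_distrib, ← Finset.sum_mul]
  rw [h2]
  have h4 : ∀ m : Fin n, (((n:ℝ)-1)⁻¹ * ∑ m' ∈ Finset.univ.erase m, y m' - (n:ℝ)⁻¹ * ∑ m', y m')^2
      = ((∑ m', y m') * ((n:ℝ)*((n:ℝ)-1))⁻¹)^2
        - (2 * ((∑ m', y m') * ((n:ℝ)*((n:ℝ)-1))⁻¹) * ((n:ℝ)-1)⁻¹) * y m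
        + (((n:ℝ)-1)⁻¹)^2 * (y m * y m) := by
    intro m; rw [h1 m]; field_simp; ring
  rw [Finset.sum_congr rfl fun m _ => h4 m, Finset.sum_add_distrib, Finset.sum_sub_distrib,
    Finset.sum_const, Finset.card_univ, Fintype.card_fin, nsmul_eq_mul,
    ← Finset.mul_sum, ← Finset.mul_sum]
  field_simp
  ring

lemma condexp_indicator_mul_of_indep {Ω : Type*} {m₀ mi : MeasurableSpace Ω}
    [mΩ : MeasurableSpace Ω] {P : Measure Ω} [IsProbabilityMeasure P]
    (hm₀ : m₀ ≤ mΩ) (hmi : mi ≤ mΩ)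
    (hindep : ProbabilityTheory.Indep mi m₀ P)
    {A : Set Ω} (hA : MeasurableSet[mi] A)
    {f : Ω → ℝ} (hf : StronglyMeasurable[m₀] f) (hfint : Integrable f P) :
    P[A.indicator f | m₀] =ᵐ[P] fun ω => (P A).toReal * f ω := by
  have hA' : MeasurableSet[mΩ] A := hmi _ hA
  have heq : A.indicator f = f * A.indicator (fun _ => (1:ℝ)) := by
    funext ω; by_cases h : ω ∈ A <;> simp [Set.indicator_apply, h]
  have hgint : Integrable (A.indicator fun _ => (1:ℝ)) P :=
    (integrable_const (1:ℝ)).indicator hA'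
  have hfg : Integrable (f * A.indicator fun _ => (1:ℝ)) P := by
    rw [← heq]; exact hfint.indicator hA'
  have h1 := condExp_mul_of_stronglyMeasurable_left hf hfg hgint
  have hsm : StronglyMeasurable[mi] (A.indicator fun _ => (1:ℝ)) :=
    stronglyMeasurable_const.indicator hA
  have h2 := condExp_indep_eq hmi hm₀ hsm hindep
  have h3 : ∫ ω, A.indicator (fun _ => (1:ℝ)) ω ∂P = (P A).toReal := by
    rw [integral_indicator_const (1:ℝ) hA', smul_eq_mul, mul_one, measureReal_def]
  rw [heq]
  refine h1.trans ?_
  filter_upwards [h2] with ω hω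
  simp only [Pi.mul_apply, hω, h3]
  ring

lemma jk_aux {Ω : Type*} {m₀ mi : MeasurableSpace Ω}
    [mΩ : MeasurableSpace Ω] {P : Measure Ω} [IsProbabilityMeasure P]
    {N n : ℕ} (hN : 0 < N) (hn : 2 ≤ n)
    (X : Fin N → Ω → ℝ) (idxk : Fin n → Ω → Fin N)
    (hm₀ : m₀ ≤ mΩ) (hmi : mi ≤ mΩ) (hindep : ProbabilityTheory.Indep mi m₀ P)
    (hXm₀ : ∀ i, Measurable[m₀] (X i))
    (hAmi : ∀ (m : Fin n) (i : Fin N), MeasurableSet[mi] (idxk m ⁻¹' {i}))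
    (hXmul : ∀ i i', Integrable (fun ω => X i ω * X i' ω) P)
    (hPAA : ∀ (m : Fin n) (i i' : Fin N),
      (P (idxk m ⁻¹' {i} ∩ idxk m ⁻¹' {i'})).toReal = if i = i' then (N:ℝ)⁻¹ else 0)
    (hPB : ∀ (m m' : Fin n), m' ≠ m → ∀ i i' : Fin N,
      (P (idxk m ⁻¹' {i} ∩ idxk m' ⁻¹' {i'})).toReal = (N:ℝ)⁻¹ * (N:ℝ)⁻¹) :
    P[(fun ω => ∑ m, (looMean X idxk m ω - subMean X idxk ω) ^ 2) | m₀]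
      =ᵐ[P] fun ω => wsVar X ω / ((n : ℝ) - 1) := by
  classical
  have hnz1 : (n:ℝ) ≠ 0 := Nat.cast_ne_zero.mpr (by omega)
  have hn2 : (2:ℝ) ≤ (n:ℝ) := by exact_mod_cast hn
  have hnz2 : (n:ℝ) - 1 ≠ 0 := by linarith
  have hNne : (N:ℝ) ≠ 0 := Nat.cast_ne_zero.mpr hN.ne'
  -- indicator decomposition pieces
  have hTint : ∀ (m m' : Fin n) (i i' : Fin N),
      Integrable ((idxk m ⁻¹' {i} ∩ idxk m' ⁻¹' {i'}).indicator
        (fun ω => X i ω * X i' ω)) P := fun m m' i i' =>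
    (hXmul i i').indicator (hmi _ ((hAmi m i).inter (hAmi m' i')))
  have hTeq : ∀ (m m' : Fin n) (ω : Ω),
      X (idxk m ω) ω * X (idxk m' ω) ω
        = ∑ i, ∑ i', (idxk m ⁻¹' {i} ∩ idxk m' ⁻¹' {i'}).indicator
            (fun ω => X i ω * X i' ω) ω := by
    intro m m' ω
    simp only [Set.indicator_apply, Set.mem_inter_iff, Set.mem_preimage,
      Set.mem_singleton_iff, ite_and]
    have hin : ∀ i : Fin N,
        (∑ i', if idxk m ω = i then
          (if idxk m' ω = i' then X i ω * X i' ω else 0) else 0)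
        = if idxk m ω = i then X i ω * X (idxk m' ω) ω else 0 := by
      intro i
      by_cases h : idxk m ω = i
      · simp [h, Finset.sum_ite_eq]
      · simp [h]
    rw [Finset.sum_congr rfl fun i _ => hin i]
    simp [Finset.sum_ite_eq]
  have hTce : ∀ (m m' : Fin n) (i i' : Fin N),
      P[(idxk m ⁻¹' {i} ∩ idxk m' ⁻¹' {i'}).indicator (fun ω => X i ω * X i' ω)|m₀]
        =ᵐ[P] fun ω => (P (idxk m ⁻¹' {i} ∩ idxk m' ⁻¹' {i'})).toReal * (X i ω * X i' ω) :=
    fun m m' i i' =>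
      condexp_indicator_mul_of_indep hm₀ hmi hindep
        ((hAmi m i).inter (hAmi m' i'))
        (((hXm₀ i).mul (hXm₀ i')).stronglyMeasurable) (hXmul i i')
  -- conditional expectation of products of sampled variables
  have hYce : ∀ (m m' : Fin n),
      P[(fun ω => X (idxk m ω) ω * X (idxk m' ω) ω)|m₀] =ᵐ[P]
        fun ω => ∑ i, ∑ i',
          (P (idxk m ⁻¹' {i} ∩ idxk m' ⁻¹' {i'})).toReal * (X i ω * X i' ω) := by
    intro m m'
    have he : (fun ω => X (idxk m ω) ω * X (idxk m' ω) ω)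
        = ∑ i, ∑ i', (idxk m ⁻¹' {i} ∩ idxk m' ⁻¹' {i'}).indicator
            (fun ω => X i ω * X i' ω) := by
      funext ω
      rw [hTeq m m' ω]
      simp [Finset.sum_apply]
    rw [he]
    have step1 : ∀ i : Fin N,
        P[∑ i', (idxk m ⁻¹' {i} ∩ idxk m' ⁻¹' {i'}).indicator
            (fun ω => X i ω * X i' ω)|m₀] =ᵐ[P]
          fun ω => ∑ i', (P (idxk m ⁻¹' {i} ∩ idxk m' ⁻¹' {i'})).toReal
            * (X i ω * X i' ω) := by
      intro i
      refine (condExp_finsetSum (fun i' _ => hTint m m' i i') m₀).trans ?_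
      have hall := ae_all_iff.mpr fun i' : Fin N => hTce m m' i i'
      filter_upwards [hall] with ω hω
      simp only [Finset.sum_apply]
      exact Finset.sum_congr rfl fun i' _ => hω i'
    refine (condExp_finsetSum (fun i _ =>
      integrable_finset_sum' _ fun i' _ => hTint m m' i i') m₀).trans ?_
    have hall := ae_all_iff.mpr step1
    filter_upwards [hall] with ω hω
    simp only [Finset.sum_apply]
    exact Finset.sum_congr rfl fun i _ => hω i
  -- diagonal terms
  have hdiag : ∀ m : Fin n,
      P[(fun ω => X (idxk m ω) ω * X (idxk m ω) ω)|m₀] =ᵐ[P]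
        fun ω => (N:ℝ)⁻¹ * ∑ i, X i ω * X i ω := by
    intro m
    refine (hYce m m).trans (Filter.Eventually.of_forall fun ω => ?_)
    dsimp only
    rw [Finset.mul_sum]
    refine Finset.sum_congr rfl fun i _ => ?_
    rw [Finset.sum_eq_single i]
    · rw [hPAA]; simp
    · intro i' _ hne
      rw [hPAA, if_neg (fun h => hne h.symm), zero_mul]
    · intro h; exact absurd (Finset.mem_univ _) h
  -- off-diagonal terms
  have hoff : ∀ (m m' : Fin n), m' ≠ m →
      P[(fun ω => X (idxk m ω) ω * X (idxk m' ω) ω)|m₀] =ᵐ[P]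
        fun ω => wsMean X ω * wsMean X ω := by
    intro m m' hmm
    refine (hYce m m').trans (Filter.Eventually.of_forall fun ω => ?_)
    dsimp only
    have hs := Finset.sum_mul_sum (Finset.univ : Finset (Fin N))
      (Finset.univ : Finset (Fin N)) (fun i => X i ω) (fun i' => X i' ω)
    have e1 : ∑ i, ∑ i', (P (idxk m ⁻¹' {i} ∩ idxk m' ⁻¹' {i'})).toReal * (X i ω * X i' ω)
        = ((N:ℝ)⁻¹ * (N:ℝ)⁻¹) * ∑ i, ∑ i', X i ω * X i' ω := by
      rw [Finset.mul_sum]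
      refine Finset.sum_congr rfl fun i _ => ?_
      rw [Finset.mul_sum]
      exact Finset.sum_congr rfl fun i' _ => by rw [hPB m m' hmm]
    rw [e1, ← hs, wsMean]
    ring
  -- integrability of sampled products
  have hYYint : ∀ m m' : Fin n,
      Integrable (fun ω => X (idxk m ω) ω * X (idxk m' ω) ω) P := by
    intro m m'
    have h := integrable_finset_sum (Finset.univ : Finset (Fin N))
      fun i _ => integrable_finset_sum (Finset.univ : Finset (Fin N))
        fun i' _ => hTint m m' i i'
    refine h.congr (Filter.Eventually.of_forall fun ω => ?_)
    exact (hTeq m m' ω).symm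
  -- the two aggregated conditional expectations
  have hG1ce : P[(fun ω => ∑ m, X (idxk m ω) ω * X (idxk m ω) ω)|m₀] =ᵐ[P]
      fun ω => (n:ℝ) * ((N:ℝ)⁻¹ * ∑ i, X i ω * X i ω) := by
    have he : (fun ω => ∑ m, X (idxk m ω) ω * X (idxk m ω) ω)
        = ∑ m, (fun ω => X (idxk m ω) ω * X (idxk m ω) ω) := by
      funext ω; simp [Finset.sum_apply]
    rw [he]
    refine (condExp_finsetSum (fun m _ => hYYint m m) m₀).trans ?_
    have hall := ae_all_iff.mpr hdiag
    filter_upwards [hall] with ω hω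
    simp only [Finset.sum_apply]
    rw [Finset.sum_congr rfl fun m _ => hω m, Finset.sum_const, Finset.card_univ,
      Fintype.card_fin, nsmul_eq_mul]
  have hG2ce : P[(fun ω => ∑ m, ∑ m' ∈ Finset.univ.erase m,
        X (idxk m ω) ω * X (idxk m' ω) ω)|m₀] =ᵐ[P]
      fun ω => ((n:ℝ) * ((n:ℝ) - 1)) * (wsMean X ω * wsMean X ω) := by
    have he : (fun ω => ∑ m, ∑ m' ∈ Finset.univ.erase m,
          X (idxk m ω) ω * X (idxk m' ω) ω)
        = ∑ m, (fun ω => ∑ m' ∈ Finset.univ.erase m,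
            X (idxk m ω) ω * X (idxk m' ω) ω) := by
      funext ω; simp [Finset.sum_apply]
    rw [he]
    have hinnerint : ∀ m : Fin n, Integrable
        (fun ω => ∑ m' ∈ Finset.univ.erase m, X (idxk m ω) ω * X (idxk m' ω) ω) P :=
      fun m => integrable_finset_sum _ fun m' _ => hYYint m m'
    refine (condExp_finsetSum (fun m _ => hinnerint m) m₀).trans ?_
    have inner : ∀ m : Fin n,
        P[(fun ω => ∑ m' ∈ Finset.univ.erase m, X (idxk m ω) ω * X (idxk m' ω) ω)|m₀]
          =ᵐ[P] fun ω => ((n:ℝ) - 1) * (wsMean X ω * wsMean X ω) := by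
      intro m
      have he2 : (fun ω => ∑ m' ∈ Finset.univ.erase m, X (idxk m ω) ω * X (idxk m' ω) ω)
          = ∑ m' ∈ Finset.univ.erase m, (fun ω => X (idxk m ω) ω * X (idxk m' ω) ω) := by
        funext ω; simp [Finset.sum_apply]
      rw [he2]
      refine (condExp_finsetSum (fun m' _ => hYYint m m') m₀).trans ?_
      have hcond : ∀ m' : Fin n, ∀ᵐ ω ∂P, m' ≠ m →
          (P[(fun ω => X (idxk m ω) ω * X (idxk m' ω) ω)|m₀]) ω
            = wsMean X ω * wsMean X ω := by
        intro m'
        by_cases h : m' = m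
        · exact Filter.Eventually.of_forall fun ω (h' : m' ≠ m) => absurd h h'
        · exact (hoff m m' h).mono fun ω hω (_ : m' ≠ m) => hω
      have hall := ae_all_iff.mpr hcond
      filter_upwards [hall] with ω hω
      simp only [Finset.sum_apply]
      rw [Finset.sum_congr rfl fun m' hm' => hω m' (Finset.ne_of_mem_erase hm'),
        Finset.sum_const, Finset.card_erase_of_mem (Finset.mem_univ m),
        Finset.card_univ, Fintype.card_fin, nsmul_eq_mul]
      rw [Nat.cast_sub (by omega : 1 ≤ n), Nat.cast_one]
    have hall := ae_all_iff.mpr inner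
    filter_upwards [hall] with ω hω
    simp only [Finset.sum_apply]
    rw [Finset.sum_congr rfl fun m _ => hω m, Finset.sum_const, Finset.card_univ,
      Fintype.card_fin, nsmul_eq_mul]
    ring
  -- algebraic reduction of the jackknife sum
  have hFfun : (fun ω => ∑ m, (looMean X idxk m ω - subMean X idxk ω) ^ 2)
      = (((n:ℝ)*((n:ℝ)-1))⁻¹ • fun ω => ∑ m, X (idxk m ω) ω * X (idxk m ω) ω)
        - (((n:ℝ)*((n:ℝ)-1)^2)⁻¹ • fun ω => ∑ m, ∑ m' ∈ Finset.univ.erase m,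
            X (idxk m ω) ω * X (idxk m' ω) ω) := by
    funext ω
    have h := alg_key hn (fun m => X (idxk m ω) ω)
    simp only [Pi.sub_apply, Pi.smul_apply, smul_eq_mul, looMean, subMean]
    rw [sub_eq_add_neg] at h ⊢
    convert h using 3
  rw [hFfun]
  have hG1int : Integrable (fun ω => ∑ m, X (idxk m ω) ω * X (idxk m ω) ω) P :=
    integrable_finset_sum _ fun m _ => hYYint m m
  have hG2int : Integrable (fun ω => ∑ m, ∑ m' ∈ Finset.univ.erase m,
      X (idxk m ω) ω * X (idxk m' ω) ω) P :=
    integrable_finset_sum _ fun m _ =>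
      integrable_finset_sum _ fun m' _ => hYYint m m'
  refine (condExp_sub (hG1int.smul _) (hG2int.smul _) m₀).trans ?_
  have h1 := condExp_smul (μ := P) (m := m₀) (((n:ℝ)*((n:ℝ)-1))⁻¹)
    (fun ω => ∑ m, X (idxk m ω) ω * X (idxk m ω) ω)
  have h2 := condExp_smul (μ := P) (m := m₀) (((n:ℝ)*((n:ℝ)-1)^2)⁻¹)
    (fun ω => ∑ m, ∑ m' ∈ Finset.univ.erase m, X (idxk m ω) ω * X (idxk m' ω) ω)
  filter_upwards [h1, h2, hG1ce, hG2ce] with ω e1 e2 e3 e4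
  simp only [Pi.sub_apply]
  rw [e1, e2]
  simp only [Pi.smul_apply, smul_eq_mul]
  rw [e3, e4, aux_wsVar hN X ω]
  field_simp

/-- for the identity transformation, the conditional expectation of the
jackknife sum of squared differences recovers the whole-sample variance: if
`E(X₁²) < ∞`, then `E[∑ₘ (μ̂⁽ᵏ⁾₋ₘ − μ̂⁽ᵏ⁾)² | X₁, …, X_N] = σ̂²/(n−1)` a.s. -/
theorem jackknife_sum_sq_condexp
    {Ω : Type*} [MeasurableSpace Ω] (P : Measure Ω) [IsProbabilityMeasure P]
    {N n K : ℕ} (hN : 0 < N) (hn : 2 ≤ n) (hK : 0 < K)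
    (X : Fin N → Ω → ℝ) (idx : Fin K → Fin n → Ω → Fin N)
    -- the Xᵢ are i.i.d. real random variables
    (hXmeas : ∀ i, Measurable (X i))
    (hXindep : iIndepFun X P)
    (hXident : ∀ i j, IdentDistrib (X i) (X j) P P)
    -- the sampling indices are measurable, mutually independent,
    -- independent of (X₁, …, X_N), and uniformly distributed on {1, …, N}
    (hidxmeas : ∀ k m, Measurable (idx k m))
    (hidxindep : iIndepFun
      (fun p : Fin K × Fin n => idx p.1 p.2) P)
    (hidxX : IndepFun (fun ω (p : Fin K × Fin n) => idx p.1 p.2 ω)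
      (fun ω (i : Fin N) => X i ω) P)
    (hunif : ∀ k m (j : Fin N), P (idx k m ⁻¹' {j}) = (N : ℝ≥0∞)⁻¹)
    -- E(X₁²) < ∞
    (hL2 : MemLp (X ⟨0, hN⟩) 2 P)
    (k : Fin K) :
    P[(fun ω => ∑ m, (looMean X (idx k) m ω - subMean X (idx k) ω) ^ 2) |
        MeasurableSpace.comap (fun ω (i : Fin N) => X i ω) inferInstance]
      =ᵐ[P] fun ω => wsVar X ω / ((n : ℝ) - 1) := by
  classical
  have hXvecm : Measurable (fun ω (i : Fin N) => X i ω) :=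
    measurable_pi_lambda _ hXmeas
  have hIvecm : Measurable (fun ω (p : Fin K × Fin n) => idx p.1 p.2 ω) :=
    measurable_pi_lambda _ fun p => hidxmeas p.1 p.2
  have hindep : ProbabilityTheory.Indep
      (MeasurableSpace.comap (fun ω (p : Fin K × Fin n) => idx p.1 p.2 ω) inferInstance)
      (MeasurableSpace.comap (fun ω (i : Fin N) => X i ω) inferInstance) P :=
    (IndepFun_iff_Indep _ _ P).mp hidxX
  have hXm₀ : ∀ i, Measurable[MeasurableSpace.comap (fun ω (i : Fin N) => X i ω) inferInstance]
      (X i) := by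
    intro i
    have hcm : Measurable[MeasurableSpace.comap (fun ω (i : Fin N) => X i ω) inferInstance]
        (fun ω (i : Fin N) => X i ω) :=
      measurable_iff_comap_le.mpr le_rfl
    exact (measurable_pi_apply i).comp hcm
  have hAmi : ∀ (m : Fin n) (i : Fin N),
      MeasurableSet[MeasurableSpace.comap
        (fun ω (p : Fin K × Fin n) => idx p.1 p.2 ω) inferInstance]
        (idx k m ⁻¹' {i}) := by
    intro m i
    have hcm : Measurable[MeasurableSpace.comap
        (fun ω (p : Fin K × Fin n) => idx p.1 p.2 ω) inferInstance]
        (fun ω (p : Fin K × Fin n) => idx p.1 p.2 ω) :=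
      measurable_iff_comap_le.mpr le_rfl
    have h0 : Measurable[MeasurableSpace.comap
        (fun ω (p : Fin K × Fin n) => idx p.1 p.2 ω) inferInstance] (idx k m) :=
      (measurable_pi_apply (k, m)).comp hcm
    exact h0 (measurableSet_singleton i)
  have hX2 : ∀ i, MemLp (X i) 2 P := fun i => (hXident ⟨0, hN⟩ i).memLp_snd hL2
  have hXmul : ∀ i i', Integrable (fun ω => X i ω * X i' ω) P := by
    intro i i'
    have hpqr : (1 : ℝ≥0∞)/1 = 1/2 + 1/2 := by
      rw [ENNReal.add_halves]; simp
    have h : MemLp (X i • X i') 1 P :=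
      MemLp.smul (𝕜 := ℝ) (hX2 i') (hX2 i) (hpqr := ⟨by rw [inv_one, ENNReal.inv_two_add_inv_two]⟩)
    have h2 := memLp_one_iff_integrable.mp h
    exact h2
  have hPAA : ∀ (m : Fin n) (i i' : Fin N),
      (P (idx k m ⁻¹' {i} ∩ idx k m ⁻¹' {i'})).toReal = if i = i' then (N:ℝ)⁻¹ else 0 := by
    intro m i i'
    by_cases h : i = i'
    · subst h
      rw [Set.inter_self, hunif k m i]
      simp
    · have hem : idx k m ⁻¹' {i} ∩ idx k m ⁻¹' {i'} = ∅ := by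
        ext ω
        simp only [Set.mem_inter_iff, Set.mem_preimage, Set.mem_singleton_iff,
          Set.mem_empty_iff_false, iff_false, not_and]
        intro h1 h2
        exact h (h1 ▸ h2 ▸ rfl)
      rw [hem]
      simp [h]
  have hPB : ∀ (m m' : Fin n), m' ≠ m → ∀ i i' : Fin N,
      (P (idx k m ⁻¹' {i} ∩ idx k m' ⁻¹' {i'})).toReal = (N:ℝ)⁻¹ * (N:ℝ)⁻¹ := by
    intro m m' hmm i i'
    have hne : ((k, m) : Fin K × Fin n) ≠ (k, m') := by
      intro h
      exact hmm (congrArg Prod.snd h).symm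
    have hind : IndepFun (idx k m) (idx k m') P := hidxindep.indepFun hne
    have h := hind.measure_inter_preimage_eq_mul {i} {i'}
      (measurableSet_singleton _) (measurableSet_singleton _)
    rw [h, hunif, hunif, ENNReal.toReal_mul]
    simp
  exact jk_aux hN hn X (idx k) hXvecm.comap_le hIvecm.comap_le hindep
    hXm₀ hAmi hXmul hPAA hPB
end

section
/- The bias of the subsample one-shot estimator does not improve with the number of subsamples while its conditional variance does: if g : ℝ → ℝ is measurable and g(μ̂^{(1)}) is square integrable, then E(θ̂_SOS) = E(θ̂^{(1)}), and Var(θ̂_SOS | X_1, …, X_N) = K^{-1} Var(θ̂^{(1)} | X_1, …, X_N) almost surely. -/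
open MeasureTheory ProbabilityTheory Filter
open scoped ENNReal NNReal




section Comb
variable {V : Type*} [Fintype V] {K : ℕ}

private lemma sum_eval_pow (s : V → ℝ) (k : Fin K) :
    ∑ w : Fin K → V, s (w k) = (Fintype.card V : ℝ) ^ (K - 1) * ∑ v, s v := by
  classical
  have h1 : ∀ w : Fin K → V, s (w k) = ∏ j, (if j = k then s (w j) else 1) := by
    intro w
    rw [Finset.prod_eq_single k (fun j _ hj => if_neg hj) (by simp)]
    simp
  calc ∑ w : Fin K → V, s (w k)
      = ∑ w : Fin K → V, ∏ j, (if j = k then s (w j) else 1) :=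
        Finset.sum_congr rfl fun w _ => h1 w
    _ = ∑ w ∈ Fintype.piFinset (fun _ : Fin K => (Finset.univ : Finset V)),
          ∏ j, (if j = k then s (w j) else 1) := by rw [Fintype.piFinset_univ]
    _ = ∏ j : Fin K, ∑ v ∈ (Finset.univ : Finset V), (if j = k then s v else 1) :=
        (Finset.prod_univ_sum (fun _ : Fin K => (Finset.univ : Finset V)) (fun j v => if j = k then s v else 1)).symm
    _ = ∏ j : Fin K, ∑ v : V, (if j = k then s v else 1) := rfl
    _ = ∏ j : Fin K, (if j = k then ∑ v : V, s v else (Fintype.card V : ℝ)) := by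
        refine Finset.prod_congr rfl fun j _ => ?_
        split <;> simp [Finset.card_univ]
    _ = (Fintype.card V : ℝ) ^ (K - 1) * ∑ v, s v := by
        rw [← Finset.mul_prod_erase Finset.univ _ (Finset.mem_univ k), if_pos rfl]
        rw [Finset.prod_congr rfl (fun j hj => if_neg (Finset.ne_of_mem_erase hj))]
        rw [Finset.prod_const, Finset.card_erase_of_mem (Finset.mem_univ k),
          Finset.card_univ, Fintype.card_fin, mul_comm]

private lemma sum_eval_mul_eq_zero (h : V → ℝ) (hz : ∑ v, h v = 0) {k k' : Fin K}
    (hne : k ≠ k') : ∑ w : Fin K → V, h (w k) * h (w k') = 0 := by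
  classical
  have h1 : ∀ w : Fin K → V, h (w k) * h (w k')
      = ∏ j, ((if j = k then h (w j) else 1) * (if j = k' then h (w j) else 1)) := by
    intro w
    rw [Finset.prod_mul_distrib,
      Finset.prod_eq_single k (fun j _ hj => if_neg hj) (by simp), if_pos rfl,
      Finset.prod_eq_single k' (fun j _ hj => if_neg hj) (by simp), if_pos rfl]
  calc ∑ w : Fin K → V, h (w k) * h (w k')
      = ∑ w ∈ Fintype.piFinset (fun _ : Fin K => (Finset.univ : Finset V)),
          ∏ j, ((if j = k then h (w j) else 1) * (if j = k' then h (w j) else 1)) := by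
        rw [Fintype.piFinset_univ]; exact Finset.sum_congr rfl fun w _ => h1 w
    _ = ∏ j : Fin K, ∑ v ∈ (Finset.univ : Finset V), ((if j = k then h v else 1) * (if j = k' then h v else 1)) :=
        (Finset.prod_univ_sum (fun _ : Fin K => (Finset.univ : Finset V))
          (fun j v => (if j = k then h v else 1) * (if j = k' then h v else 1))).symm
    _ = 0 := by
        refine Finset.prod_eq_zero (Finset.mem_univ k) ?_
        simp only [if_pos rfl, if_neg hne, mul_one]
        exact hz

end Comb


private lemma condexp_eval_indep {Ω α β : Type*} [mΩ : MeasurableSpace Ω]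
    {P : Measure Ω} [IsProbabilityMeasure P]
    [Fintype α] [MeasurableSpace α] [MeasurableSingletonClass α] [MeasurableSpace β]
    {I : Ω → α} {Z : Ω → β} (hI : Measurable I) (hZ : Measurable Z)
    (hind : IndepFun I Z P)
    (F : α → β → ℝ) (hF : ∀ u, Measurable (F u))
    (hint : Integrable (fun ω => F (I ω) (Z ω)) P) :
    P[(fun ω => F (I ω) (Z ω)) | MeasurableSpace.comap Z inferInstance]
      =ᵐ[P] fun ω => ∑ u, (P (I ⁻¹' {u})).toReal * F u (Z ω) := by
  classical
  have hm : MeasurableSpace.comap Z inferInstance ≤ mΩ := hZ.comap_le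
  have hsu : ∀ u : α, MeasurableSet (I ⁻¹' {u}) := fun u => hI (measurableSet_singleton u)
  set T : α → Ω → ℝ :=
    fun u ω => F u (Z ω) * Set.indicator (I ⁻¹' {u}) (fun _ => (1 : ℝ)) ω with hT
  have hTeq : (fun ω => F (I ω) (Z ω)) = ∑ u : α, T u := by
    funext ω
    simp only [Finset.sum_apply, hT, Set.indicator_apply, Set.mem_preimage,
      Set.mem_singleton_iff, mul_ite, mul_one, mul_zero]
    rw [Finset.sum_ite_eq Finset.univ (I ω) (fun u => F u (Z ω)), if_pos (Finset.mem_univ _)]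
  have hTint : ∀ u, Integrable (T u) P := by
    intro u
    refine hint.mono (((hF u).comp hZ).mul
      (measurable_const.indicator (hsu u))).aestronglyMeasurable (ae_of_all _ fun ω => ?_)
    simp only [hT, Set.indicator_apply, Set.mem_preimage, Set.mem_singleton_iff]
    by_cases h : I ω = u
    · subst h; simp
    · simp [h, norm_nonneg]
  have h2 : ∀ u : α, P[T u | MeasurableSpace.comap Z inferInstance]
      =ᵐ[P] fun ω => (P (I ⁻¹' {u})).toReal * F u (Z ω) := by
    intro u
    have hfm : StronglyMeasurable[MeasurableSpace.comap Z inferInstance]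
        (fun ω => F u (Z ω)) :=
      ((hF u).comp (measurable_iff_comap_le.mpr le_rfl)).stronglyMeasurable
    have hgint : Integrable ((I ⁻¹' {u}).indicator (fun _ => (1 : ℝ))) P :=
      (integrable_const (1 : ℝ)).indicator (hsu u)
    have hpull := condExp_mul_of_stronglyMeasurable_left (μ := P) hfm
      (g := (I ⁻¹' {u}).indicator (fun _ => (1 : ℝ))) (hTint u) hgint
    have hindep : Indep (MeasurableSpace.comap I inferInstance)
        (MeasurableSpace.comap Z inferInstance) P := (IndepFun_iff_Indep I Z P).mp hind
    have hgm : StronglyMeasurable[MeasurableSpace.comap I inferInstance]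
        ((I ⁻¹' {u}).indicator (fun _ => (1 : ℝ))) :=
      stronglyMeasurable_const.indicator ⟨{u}, measurableSet_singleton u, rfl⟩
    have hce := condExp_indep_eq hI.comap_le hm hgm hindep
    have hval : (∫ ω, (I ⁻¹' {u}).indicator (fun _ => (1 : ℝ)) ω ∂P)
        = (P (I ⁻¹' {u})).toReal := by
      rw [integral_indicator_const (1 : ℝ) (hsu u)]; simp [Measure.real]
    refine hpull.trans ?_
    filter_upwards [hce] with ω hω
    simp only [Pi.mul_apply, hω, hval, mul_comm]
  have h1 : P[(fun ω => F (I ω) (Z ω)) | MeasurableSpace.comap Z inferInstance]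
      =ᵐ[P] ∑ u : α, P[T u | MeasurableSpace.comap Z inferInstance] := by
    rw [hTeq]
    exact condExp_finsetSum (fun u _ => hTint u) _
  refine h1.trans ?_
  have hall : ∀ᵐ ω ∂P, ∀ u : α,
      (P[T u | MeasurableSpace.comap Z inferInstance]) ω
        = (P (I ⁻¹' {u})).toReal * F u (Z ω) := ae_all_iff.mpr fun u => h2 u
  filter_upwards [hall] with ω hω
  simp only [Finset.sum_apply]
  exact Finset.sum_congr rfl fun u _ => hω u


/-- the bias of the subsample one-shot estimator does not improve with the
number of subsamples while its conditional variance does: if `g` is measurable and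
`g(μ̂⁽¹⁾)` is square integrable, then `E(θ̂_SOS) = E(θ̂⁽¹⁾)` and
`Var(θ̂_SOS | X₁, …, X_N) = K⁻¹ Var(θ̂⁽¹⁾ | X₁, …, X_N)` almost surely. -/
theorem sos_bias_and_conditional_variance
    {Ω : Type*} [MeasurableSpace Ω] (P : Measure Ω) [IsProbabilityMeasure P]
    {N n K : ℕ} (hN : 0 < N) (hn : 2 ≤ n) (hK : 0 < K)
    (X : Fin N → Ω → ℝ) (idx : Fin K → Fin n → Ω → Fin N)
    -- the Xᵢ are i.i.d. real random variables
    (hXmeas : ∀ i, Measurable (X i))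
    (hXindep : iIndepFun X P)
    (hXident : ∀ i j, IdentDistrib (X i) (X j) P P)
    -- the sampling indices are measurable, mutually independent,
    -- independent of (X₁, …, X_N), and uniformly distributed on {1, …, N}
    (hidxmeas : ∀ k m, Measurable (idx k m))
    (hidxindep : iIndepFun
      (fun p : Fin K × Fin n => idx p.1 p.2) P)
    (hidxX : IndepFun (fun ω (p : Fin K × Fin n) => idx p.1 p.2 ω)
      (fun ω (i : Fin N) => X i ω) P)
    (hunif : ∀ k m (j : Fin N), P (idx k m ⁻¹' {j}) = (N : ℝ≥0∞)⁻¹)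
    (g : ℝ → ℝ) (hg : Measurable g)
    (hL2 : MemLp (fun ω => g (subMean X (idx ⟨0, hK⟩) ω)) 2 P) :
    (∫ ω, (K : ℝ)⁻¹ * ∑ k, g (subMean X (idx k) ω) ∂P
        = ∫ ω, g (subMean X (idx ⟨0, hK⟩) ω) ∂P) ∧
    P[(fun ω =>
          ((K : ℝ)⁻¹ * ∑ k, g (subMean X (idx k) ω) -
              (P[(fun ω' => (K : ℝ)⁻¹ * ∑ k, g (subMean X (idx k) ω')) |
                  MeasurableSpace.comap (fun ω' (i : Fin N) => X i ω') inferInstance]) ω) ^ 2) |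
        MeasurableSpace.comap (fun ω (i : Fin N) => X i ω) inferInstance]
      =ᵐ[P] fun ω => (K : ℝ)⁻¹ *
        (P[(fun ω' =>
              (g (subMean X (idx ⟨0, hK⟩) ω') -
                  (P[(fun ω'' => g (subMean X (idx ⟨0, hK⟩) ω'')) |
                      MeasurableSpace.comap (fun ω'' (i : Fin N) => X i ω'') inferInstance]) ω') ^ 2) |
            MeasurableSpace.comap (fun ω (i : Fin N) => X i ω) inferInstance]) ω := by
  
  classical
  have hKR : (K : ℝ) ≠ 0 := Nat.cast_ne_zero.mpr hK.ne'
  have hNR : (N : ℝ) ≠ 0 := Nat.cast_ne_zero.mpr hN.ne'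
  set k0 : Fin K := ⟨0, hK⟩ with hk0
  set Z : Ω → Fin N → ℝ := fun ω i => X i ω with hZdef
  set I : Ω → (Fin K × Fin n → Fin N) := fun ω p => idx p.1 p.2 ω with hIdef
  have hZ : Measurable Z := measurable_pi_lambda _ hXmeas
  have hI : Measurable I := measurable_pi_lambda _ fun p => hidxmeas p.1 p.2
  set R : Fin K → (Fin K × Fin n → Fin N) → (Fin n → Fin N) := fun k u m => u (k, m) with hR
  set s : (Fin n → Fin N) → (Fin N → ℝ) → ℝ :=
    fun v x => g ((n : ℝ)⁻¹ * ∑ m, x (v m)) with hs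
  set c : (Fin N → ℝ) → ℝ := fun x => ((N : ℝ) ^ n)⁻¹ * ∑ v, s v x with hc
  set q : ℝ := ((N : ℝ) ^ (K * n))⁻¹ with hqdef
  have hs_meas : ∀ v, Measurable (s v) := fun v =>
    hg.comp (measurable_const.mul (Finset.measurable_sum _ fun m _ => measurable_pi_apply (v m)))
  have hc_meas : Measurable c :=
    measurable_const.mul (Finset.measurable_sum _ fun v _ => hs_meas v)
  -- law of I on singletons
  have hq : ∀ u : Fin K × Fin n → Fin N, (P (I ⁻¹' {u})).toReal = q := by
    intro u
    have hset : I ⁻¹' {u} = ⋂ p : Fin K × Fin n, idx p.1 p.2 ⁻¹' {u p} := by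
      ext ω
      simp [hIdef, Set.mem_iInter, funext_iff]
    have hmeas : ∀ p : Fin K × Fin n,
        MeasurableSet[(inferInstance : MeasurableSpace (Fin N)).comap (idx p.1 p.2)]
          (idx p.1 p.2 ⁻¹' {u p}) := fun p => ⟨{u p}, measurableSet_singleton _, rfl⟩
    rw [hset, hidxindep.meas_iInter hmeas]
    simp only [hunif]
    rw [Finset.prod_const, Finset.card_univ, Fintype.card_prod, Fintype.card_fin,
      Fintype.card_fin, hqdef]
    simp [ENNReal.toReal_pow, ENNReal.toReal_inv, inv_pow]
  -- law of the k-th index block on singletons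
  have hAsing : ∀ (k : Fin K) (v : Fin n → Fin N),
      P ((fun ω (m : Fin n) => idx k m ω) ⁻¹' {v}) = (N : ℝ≥0∞)⁻¹ ^ n := by
    intro k v
    have hemb : Function.Injective (fun m : Fin n => ((k, m) : Fin K × Fin n)) :=
      fun a b h => by simpa using h
    have hset : (fun ω (m : Fin n) => idx k m ω) ⁻¹' {v}
        = ⋂ p ∈ (Finset.univ.map ⟨fun m : Fin n => ((k, m) : Fin K × Fin n), hemb⟩),
            idx p.1 p.2 ⁻¹' {v p.2} := by
      ext ω
      simp only [Set.mem_preimage, Set.mem_singleton_iff, funext_iff, Set.mem_iInter,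
        Finset.mem_map, Finset.mem_univ, true_and, Function.Embedding.coeFn_mk]
      constructor
      · rintro h p ⟨m, rfl⟩; exact h m
      · intro h m; exact h (k, m) ⟨m, rfl⟩
    have hmeas : ∀ p : Fin K × Fin n,
        p ∈ (Finset.univ.map ⟨fun m : Fin n => ((k, m) : Fin K × Fin n), hemb⟩) →
        MeasurableSet[(inferInstance : MeasurableSpace (Fin N)).comap (idx p.1 p.2)]
          (idx p.1 p.2 ⁻¹' {v p.2}) := fun p _ => ⟨{v p.2}, measurableSet_singleton _, rfl⟩
    rw [hset, hidxindep.meas_biInter hmeas, Finset.prod_map]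
    simp only [Function.Embedding.coeFn_mk, Function.comp]
    rw [Finset.prod_congr rfl (fun m _ => hunif k m (v m)), Finset.prod_const,
      Finset.card_univ, Fintype.card_fin]
  have hIndAZ : ∀ k : Fin K, IndepFun (fun ω (m : Fin n) => idx k m ω) Z P := by
    intro k
    exact hidxX.comp (φ := fun u : Fin K × Fin n → Fin N => fun m : Fin n => u (k, m))
      (ψ := id) (measurable_pi_lambda _ fun m => measurable_pi_apply (k, m)) measurable_id
  have hA : ∀ k : Fin K, Measurable (fun ω (m : Fin n) => idx k m ω) :=
    fun k => measurable_pi_lambda _ fun m => hidxmeas k m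
  have hYident : ∀ k : Fin K, IdentDistrib (fun ω => g (subMean X (idx k) ω))
      (fun ω => g (subMean X (idx k0) ω)) P P := by
    intro k
    have hAlaw : P.map (fun ω (m : Fin n) => idx k m ω)
        = P.map (fun ω (m : Fin n) => idx k0 m ω) := by
      refine Measure.ext_of_singleton fun v => ?_
      rw [Measure.map_apply (hA k) (measurableSet_singleton v),
        Measure.map_apply (hA k0) (measurableSet_singleton v), hAsing k v, hAsing k0 v]
    have hpair : ∀ j : Fin K, P.map (fun ω => ((fun m : Fin n => idx j m ω), Z ω))
        = (P.map (fun ω (m : Fin n) => idx j m ω)).prod (P.map Z) := fun j =>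
      (indepFun_iff_map_prod_eq_prod_map_map (hA j).aemeasurable hZ.aemeasurable).mp
        (hIndAZ j)
    have hGm : Measurable
        (fun p : (Fin n → Fin N) × (Fin N → ℝ) => g ((n : ℝ)⁻¹ * ∑ m, p.2 (p.1 m))) := by
      refine hg.comp (measurable_const.mul (Finset.measurable_sum _ fun m _ => ?_))
      have heq : (fun p : (Fin n → Fin N) × (Fin N → ℝ) => p.2 (p.1 m))
          = fun p => ∑ j : Fin N, if p.1 m = j then p.2 j else 0 := by
        funext p
        rw [Finset.sum_ite_eq Finset.univ (p.1 m) (fun j => p.2 j),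
          if_pos (Finset.mem_univ _)]
      rw [heq]
      refine Finset.measurable_sum _ fun j _ => Measurable.ite ?_
        ((measurable_pi_apply j).comp measurable_snd) measurable_const
      have hms : MeasurableSet ((fun p : (Fin n → Fin N) × (Fin N → ℝ) => p.1 m) ⁻¹' {j}) :=
        ((measurable_pi_apply m).comp measurable_fst) (measurableSet_singleton j)
      exact hms
    have hpairident : IdentDistrib (fun ω => ((fun m : Fin n => idx k m ω), Z ω))
        (fun ω => ((fun m : Fin n => idx k0 m ω), Z ω)) P P :=
      ⟨((hA k).prodMk hZ).aemeasurable, ((hA k0).prodMk hZ).aemeasurable,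
        by rw [hpair k, hpair k0, hAlaw]⟩
    exact hpairident.comp hGm
  have hY2 : ∀ k : Fin K, MemLp (fun ω => g (subMean X (idx k) ω)) 2 P :=
    fun k => (hYident k).memLp_iff.mpr hL2
  have hYint : ∀ k : Fin K, Integrable (fun ω => g (subMean X (idx k) ω)) P :=
    fun k => (hY2 k).integrable one_le_two
  -- combinatorial claims
  have claim1 : ∀ (t : (Fin n → Fin N) → ℝ) (k : Fin K),
      ∑ u : Fin K × Fin n → Fin N, q * t (R k u) = ((N : ℝ) ^ n)⁻¹ * ∑ v, t v := by
    intro t k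
    rw [← Finset.mul_sum]
    have he : ∑ u : Fin K × Fin n → Fin N, t (R k u)
        = ∑ w : Fin K → Fin n → Fin N, t (w k) :=
      (Equiv.sum_comp (Equiv.curry (Fin K) (Fin n) (Fin N)).symm
        (fun u => t (R k u))).symm
    rw [he, sum_eval_pow t k]
    have hcard : (Fintype.card (Fin n → Fin N) : ℝ) = (N : ℝ) ^ n := by
      rw [Fintype.card_fun, Fintype.card_fin, Fintype.card_fin]; push_cast; ring
    rw [hcard, ← mul_assoc]
    congr 1
    have hA : ((N : ℝ) ^ n) ≠ 0 := pow_ne_zero _ hNR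
    have hKsplit : ((N : ℝ) ^ n) ^ K = ((N : ℝ) ^ n) ^ (K - 1) * (N : ℝ) ^ n := by
      conv_lhs => rw [show K = (K - 1) + 1 from (Nat.succ_pred_eq_of_pos hK).symm]
      rw [pow_succ]
    rw [hqdef, pow_mul', hKsplit, mul_inv]
    field_simp
  have claim2 : ∀ (t : (Fin n → Fin N) → ℝ), (∑ v, t v) = 0 → ∀ k k' : Fin K, k ≠ k' →
      ∑ u : Fin K × Fin n → Fin N, q * (t (R k u) * t (R k' u)) = 0 := by
    intro t ht k k' hkk'
    rw [← Finset.mul_sum]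
    have he : ∑ u : Fin K × Fin n → Fin N, t (R k u) * t (R k' u)
        = ∑ w : Fin K → Fin n → Fin N, t (w k) * t (w k') :=
      (Equiv.sum_comp (Equiv.curry (Fin K) (Fin n) (Fin N)).symm
        (fun u => t (R k u) * t (R k' u))).symm
    rw [he, sum_eval_mul_eq_zero t ht hkk', mul_zero]
  -- L² facts
  have hWv : ∀ v : Fin n → Fin N, MemLp (fun ω => s v (Z ω)) 2 P := by
    intro v
    have hWm : Measurable (fun ω => s v (Z ω)) := (hs_meas v).comp hZ
    have hEmeas : MeasurableSet ((fun ω (m : Fin n) => idx k0 m ω) ⁻¹' {v}) :=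
      hA k0 (measurableSet_singleton v)
    have hcomp : (fun ω => ((fun ω' (m : Fin n) => idx k0 m ω') ⁻¹' {v}).indicator
          (fun _ => (1 : ℝ≥0∞)) ω)
        = (fun a : Fin n → Fin N => ({v} : Set (Fin n → Fin N)).indicator
            (fun _ => (1 : ℝ≥0∞)) a) ∘ (fun ω (m : Fin n) => idx k0 m ω) := by
      funext ω
      rw [Function.comp_apply]
      by_cases h : ω ∈ (fun ω' (m : Fin n) => idx k0 m ω') ⁻¹' {v}
      · rw [Set.indicator_of_mem h, Set.indicator_of_mem
          (show (fun m : Fin n => idx k0 m ω) ∈ ({v} : Set (Fin n → Fin N)) from h)]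
      · rw [Set.indicator_of_notMem h, Set.indicator_of_notMem
          (show (fun m : Fin n => idx k0 m ω) ∉ ({v} : Set (Fin n → Fin N)) from h)]
    have hind2 : IndepFun
        (fun ω => ((fun ω' (m : Fin n) => idx k0 m ω') ⁻¹' {v}).indicator
          (fun _ => (1 : ℝ≥0∞)) ω)
        (fun ω => (‖s v (Z ω)‖₊ : ℝ≥0∞) ^ 2) P := by
      rw [hcomp]
      exact (hIndAZ k0).comp (measurable_const.indicator (measurableSet_singleton v))
        (((hs_meas v).enorm).pow_const 2)
    have hmul := lintegral_mul_eq_lintegral_mul_lintegral_of_indepFun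
      (measurable_const.indicator hEmeas) ((hWm.nnnorm.coe_nnreal_ennreal).pow_const 2) hind2
    have hbound : ∀ ω, (((fun ω' (m : Fin n) => idx k0 m ω') ⁻¹' {v}).indicator
          (fun _ => (1 : ℝ≥0∞)) ω) * (‖s v (Z ω)‖₊ : ℝ≥0∞) ^ 2
        ≤ (‖g (subMean X (idx k0) ω)‖₊ : ℝ≥0∞) ^ 2 := by
      intro ω
      by_cases h : ω ∈ (fun ω' (m : Fin n) => idx k0 m ω') ⁻¹' {v}
      · rw [Set.indicator_of_mem h, one_mul]
        have hfun : (fun m : Fin n => idx k0 m ω) = v := h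
        have hsv : s v (Z ω) = g (subMean X (idx k0) ω) := by
          rw [hs]
          simp only [subMean, ← hfun]
          rfl
        rw [hsv]
      · rw [Set.indicator_of_notMem h, zero_mul]
        exact bot_le
    have hfin : ∫⁻ ω, (‖g (subMean X (idx k0) ω)‖₊ : ℝ≥0∞) ^ 2 ∂P < ∞ := by
      have h2 := hL2.integrable_sq.2
      refine lt_of_le_of_lt (le_of_eq ?_) ((hasFiniteIntegral_def _ _).mp h2)
      refine lintegral_congr fun ω => ?_
      rw [← ENNReal.coe_pow, ← nnnorm_pow]; rfl
    have hPE0 : ((N : ℝ≥0∞)⁻¹) ^ n ≠ 0 :=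
      pow_ne_zero _ (ENNReal.inv_ne_zero.mpr (ENNReal.natCast_ne_top N))
    have hPEeq : ∫⁻ ω, ((fun ω' (m : Fin n) => idx k0 m ω') ⁻¹' {v}).indicator
          (fun _ => (1 : ℝ≥0∞)) ω ∂P = P ((fun ω (m : Fin n) => idx k0 m ω) ⁻¹' {v}) :=
      lintegral_indicator_one hEmeas
    have hprod_lt : P ((fun ω (m : Fin n) => idx k0 m ω) ⁻¹' {v})
        * ∫⁻ ω, (‖s v (Z ω)‖₊ : ℝ≥0∞) ^ 2 ∂P < ∞ := by
      rw [← hPEeq, ← hmul]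
      exact lt_of_le_of_lt (lintegral_mono hbound) hfin
    have hgfin : ∫⁻ ω, (‖s v (Z ω)‖₊ : ℝ≥0∞) ^ 2 ∂P < ∞ := by
      refine ENNReal.lt_top_of_mul_ne_top_right hprod_lt.ne ?_
      rw [hAsing k0 v]
      exact hPE0
    refine (memLp_two_iff_integrable_sq hWm.aestronglyMeasurable).mpr
      ⟨(hWm.pow_const 2).aestronglyMeasurable, ?_⟩
    rw [hasFiniteIntegral_def]
    refine lt_of_le_of_lt (le_of_eq ?_) hgfin
    refine lintegral_congr fun ω => ?_
    rw [← ENNReal.coe_pow, ← nnnorm_pow]; rfl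
  have hcZ2 : MemLp (fun ω => c (Z ω)) 2 P := by
    have h1 : MemLp (fun ω => ∑ v, s v (Z ω)) 2 P :=
      memLp_finset_sum Finset.univ (fun v _ => hWv v)
    exact h1.const_mul _
  have hSOS2 : MemLp (fun ω => (K : ℝ)⁻¹ * ∑ k, g (subMean X (idx k) ω)) 2 P :=
    (memLp_finset_sum Finset.univ (fun k _ => hY2 k)).const_mul _
  -- conditional expectations
  have hY0ce : P[(fun ω => g (subMean X (idx k0) ω)) |
      MeasurableSpace.comap Z inferInstance] =ᵐ[P] fun ω => c (Z ω) := by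
    have hce := condexp_eval_indep (P := P) hI hZ hidxX
      (fun u x => s (R k0 u) x) (fun u => hs_meas (R k0 u))
      (show Integrable (fun ω => s (R k0 (I ω)) (Z ω)) P from hYint k0)
    refine Filter.EventuallyEq.trans ?_ (hce.trans ?_)
    · exact Filter.EventuallyEq.rfl
    refine Filter.EventuallyEq.of_eq (funext fun ω => ?_)
    rw [Finset.sum_congr rfl fun u (_ : u ∈ Finset.univ) => by rw [hq u]]
    rw [claim1 (fun v => s v (Z ω)) k0, hc]
  have hSOSce : P[(fun ω => (K : ℝ)⁻¹ * ∑ k, g (subMean X (idx k) ω)) |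
      MeasurableSpace.comap Z inferInstance] =ᵐ[P] fun ω => c (Z ω) := by
    have hce := condexp_eval_indep (P := P) hI hZ hidxX
      (fun u x => (K : ℝ)⁻¹ * ∑ k, s (R k u) x)
      (fun u => measurable_const.mul (Finset.measurable_sum _ fun k _ => hs_meas (R k u)))
      (show Integrable (fun ω => (K : ℝ)⁻¹ * ∑ k, s (R k (I ω)) (Z ω)) P from
        hSOS2.integrable one_le_two)
    refine Filter.EventuallyEq.trans ?_ (hce.trans ?_)
    · exact Filter.EventuallyEq.rfl
    refine Filter.EventuallyEq.of_eq (funext fun ω => ?_)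
    rw [Finset.sum_congr rfl fun u (_ : u ∈ Finset.univ) => by rw [hq u]]
    have hper : ∀ u : Fin K × Fin n → Fin N,
        q * ((K : ℝ)⁻¹ * ∑ k, s (R k u) (Z ω)) = (K : ℝ)⁻¹ * ∑ k, q * s (R k u) (Z ω) := by
      intro u
      rw [Finset.mul_sum, Finset.mul_sum]
      ring_nf
      rw [Finset.mul_sum]
      exact Finset.sum_congr rfl fun k _ => by ring
    rw [Finset.sum_congr rfl fun u (_ : u ∈ Finset.univ) => hper u, ← Finset.mul_sum,
      Finset.sum_comm,
      Finset.sum_congr rfl fun k (_ : k ∈ Finset.univ) => claim1 (fun v => s v (Z ω)) k,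
      Finset.sum_const, Finset.card_univ, Fintype.card_fin, nsmul_eq_mul, ← mul_assoc,
      inv_mul_cancel₀ hKR, one_mul, hc]
  have hcard2 : (Fintype.card (Fin n → Fin N) : ℝ) = (N : ℝ) ^ n := by
    rw [Fintype.card_fun, Fintype.card_fin, Fintype.card_fin]; push_cast; ring
  have ht0 : ∀ x : Fin N → ℝ, ∑ v, (s v x - c x) = 0 := by
    intro x
    rw [Finset.sum_sub_distrib, Finset.sum_const, Finset.card_univ, nsmul_eq_mul, hcard2, hc]
    have hA : ((N : ℝ) ^ n) ≠ 0 := pow_ne_zero _ hNR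
    field_simp
    ring
  have hdiag : ∀ (x : Fin N → ℝ) (k k' : Fin K),
      ∑ u : Fin K × Fin n → Fin N,
          q * ((s (R k u) x - c x) * (s (R k' u) x - c x))
        = if k = k' then ((N : ℝ) ^ n)⁻¹ * ∑ v, (s v x - c x) ^ 2 else 0 := by
    intro x k k'
    by_cases h : k = k'
    · subst h
      rw [if_pos rfl, ← claim1 (fun v => (s v x - c x) ^ 2) k]
      exact Finset.sum_congr rfl fun u _ => by rw [sq]
    · rw [if_neg h]
      exact claim2 (fun v => s v x - c x) (ht0 x) k k' h
  have key : ∀ x : Fin N → ℝ,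
      ∑ u : Fin K × Fin n → Fin N,
          q * ((K : ℝ)⁻¹ * ∑ k, s (R k u) x - c x) ^ 2
        = (K : ℝ)⁻¹ * (((N : ℝ) ^ n)⁻¹ * ∑ v, (s v x - c x) ^ 2) := by
    intro x
    have hinner : ∀ u : Fin K × Fin n → Fin N,
        (K : ℝ)⁻¹ * ∑ k, s (R k u) x - c x
          = (K : ℝ)⁻¹ * ∑ k, (s (R k u) x - c x) := by
      intro u
      rw [Finset.sum_sub_distrib, Finset.sum_const, Finset.card_univ, Fintype.card_fin,
        nsmul_eq_mul, mul_sub, ← mul_assoc, inv_mul_cancel₀ hKR, one_mul]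
    rw [Finset.sum_congr rfl fun u (_ : u ∈ Finset.univ) => by rw [hinner u]]
    calc ∑ u : Fin K × Fin n → Fin N,
          q * ((K : ℝ)⁻¹ * ∑ k, (s (R k u) x - c x)) ^ 2
        = ∑ u : Fin K × Fin n → Fin N, ∑ k : Fin K, ∑ k' : Fin K,
            ((K : ℝ)⁻¹) ^ 2 * (q * ((s (R k u) x - c x) * (s (R k' u) x - c x))) := by
          refine Finset.sum_congr rfl fun u _ => ?_
          rw [mul_pow, sq (∑ k : Fin K, (s (R k u) x - c x)), Finset.sum_mul_sum]
          simp only [Finset.mul_sum]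
          exact Finset.sum_congr rfl fun k _ => Finset.sum_congr rfl fun k' _ => by ring
      _ = ∑ k : Fin K, ∑ k' : Fin K, ∑ u : Fin K × Fin n → Fin N,
            ((K : ℝ)⁻¹) ^ 2 * (q * ((s (R k u) x - c x) * (s (R k' u) x - c x))) := by
          rw [Finset.sum_comm]
          exact Finset.sum_congr rfl fun k _ => Finset.sum_comm
      _ = ∑ k : Fin K, ∑ k' : Fin K, ((K : ℝ)⁻¹) ^ 2 *
            (if k = k' then ((N : ℝ) ^ n)⁻¹ * ∑ v, (s v x - c x) ^ 2 else 0) := by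
          refine Finset.sum_congr rfl fun k _ => Finset.sum_congr rfl fun k' _ => ?_
          rw [← Finset.mul_sum, hdiag x k k']
      _ = ∑ k : Fin K, ((K : ℝ)⁻¹) ^ 2 * (((N : ℝ) ^ n)⁻¹ * ∑ v, (s v x - c x) ^ 2) := by
          refine Finset.sum_congr rfl fun k _ => ?_
          rw [← Finset.mul_sum,
            Finset.sum_ite_eq Finset.univ k
              (fun _ => ((N : ℝ) ^ n)⁻¹ * ∑ v, (s v x - c x) ^ 2),
            if_pos (Finset.mem_univ k)]
      _ = (K : ℝ)⁻¹ * (((N : ℝ) ^ n)⁻¹ * ∑ v, (s v x - c x) ^ 2) := by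
          rw [Finset.sum_const, Finset.card_univ, Fintype.card_fin, nsmul_eq_mul]
          field_simp
  have e1 : P[(fun ω =>
        ((K : ℝ)⁻¹ * ∑ k, g (subMean X (idx k) ω) -
            (P[(fun ω' => (K : ℝ)⁻¹ * ∑ k, g (subMean X (idx k) ω')) |
                MeasurableSpace.comap Z inferInstance]) ω) ^ 2) |
      MeasurableSpace.comap Z inferInstance]
      =ᵐ[P] fun ω => (K : ℝ)⁻¹ * (((N : ℝ) ^ n)⁻¹ * ∑ v, (s v (Z ω) - c (Z ω)) ^ 2) := by
    have hcongr : (fun ω =>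
          ((K : ℝ)⁻¹ * ∑ k, g (subMean X (idx k) ω) -
              (P[(fun ω' => (K : ℝ)⁻¹ * ∑ k, g (subMean X (idx k) ω')) |
                  MeasurableSpace.comap Z inferInstance]) ω) ^ 2)
        =ᵐ[P] fun ω =>
          ((K : ℝ)⁻¹ * ∑ k, g (subMean X (idx k) ω) - c (Z ω)) ^ 2 := by
      filter_upwards [hSOSce] with ω hω
      rw [hω]
    refine (condExp_congr_ae hcongr).trans ?_
    have hsqint : Integrable
        (fun ω => ((K : ℝ)⁻¹ * ∑ k, g (subMean X (idx k) ω) - c (Z ω)) ^ 2) P :=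
      (hSOS2.sub hcZ2).integrable_sq
    have hce := condexp_eval_indep (P := P) hI hZ hidxX
      (fun u x => ((K : ℝ)⁻¹ * ∑ k, s (R k u) x - c x) ^ 2)
      (fun u => ((measurable_const.mul
        (Finset.measurable_sum _ fun k _ => hs_meas (R k u))).sub hc_meas).pow_const 2)
      (show Integrable
        (fun ω => ((K : ℝ)⁻¹ * ∑ k, s (R k (I ω)) (Z ω) - c (Z ω)) ^ 2) P from hsqint)
    refine Filter.EventuallyEq.trans ?_ (hce.trans ?_)
    · exact Filter.EventuallyEq.rfl
    refine Filter.EventuallyEq.of_eq (funext fun ω => ?_)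
    rw [Finset.sum_congr rfl fun u (_ : u ∈ Finset.univ) => by rw [hq u]]
    exact key (Z ω)
  have e2 : P[(fun ω' =>
        (g (subMean X (idx k0) ω') -
            (P[(fun ω'' => g (subMean X (idx k0) ω'')) |
                MeasurableSpace.comap Z inferInstance]) ω') ^ 2) |
      MeasurableSpace.comap Z inferInstance]
      =ᵐ[P] fun ω => ((N : ℝ) ^ n)⁻¹ * ∑ v, (s v (Z ω) - c (Z ω)) ^ 2 := by
    have hcongr : (fun ω' =>
          (g (subMean X (idx k0) ω') -
              (P[(fun ω'' => g (subMean X (idx k0) ω'')) |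
                  MeasurableSpace.comap Z inferInstance]) ω') ^ 2)
        =ᵐ[P] fun ω => (g (subMean X (idx k0) ω) - c (Z ω)) ^ 2 := by
      filter_upwards [hY0ce] with ω hω
      rw [hω]
    refine (condExp_congr_ae hcongr).trans ?_
    have hsqint : Integrable
        (fun ω => (g (subMean X (idx k0) ω) - c (Z ω)) ^ 2) P :=
      ((hY2 k0).sub hcZ2).integrable_sq
    have hce := condexp_eval_indep (P := P) hI hZ hidxX
      (fun u x => (s (R k0 u) x - c x) ^ 2)
      (fun u => ((hs_meas (R k0 u)).sub hc_meas).pow_const 2)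
      (show Integrable (fun ω => (s (R k0 (I ω)) (Z ω) - c (Z ω)) ^ 2) P from hsqint)
    refine Filter.EventuallyEq.trans ?_ (hce.trans ?_)
    · exact Filter.EventuallyEq.rfl
    refine Filter.EventuallyEq.of_eq (funext fun ω => ?_)
    rw [Finset.sum_congr rfl fun u (_ : u ∈ Finset.univ) => by rw [hq u]]
    exact claim1 (fun v => (s v (Z ω) - c (Z ω)) ^ 2) k0
  constructor
  · rw [MeasureTheory.integral_const_mul, integral_finset_sum _ fun k _ => hYint k,
      Finset.sum_congr rfl fun k _ => (hYident k).integral_eq,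
      Finset.sum_const, Finset.card_univ, Fintype.card_fin, nsmul_eq_mul]
    field_simp
  · refine e1.trans ?_
    have e2' : (fun ω => (K : ℝ)⁻¹ *
          (P[(fun ω' =>
              (g (subMean X (idx k0) ω') -
                  (P[(fun ω'' => g (subMean X (idx k0) ω'')) |
                      MeasurableSpace.comap Z inferInstance]) ω') ^ 2) |
            MeasurableSpace.comap Z inferInstance]) ω)
        =ᵐ[P] fun ω => (K : ℝ)⁻¹ * (((N : ℝ) ^ n)⁻¹ * ∑ v, (s v (Z ω) - c (Z ω)) ^ 2) := by
      filter_upwards [e2] with ω hω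
      rw [hω]
    exact e2'.symm
end
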